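/- arXiv:1503.04543 — 4 statements merged into one kernel-verified Lean document; each statement's English description precedes it below -/
import Mathlib

section
/- Let n ≥ 3 be an odd integer. Then the D_n-lattices satisfy M̃₊ ⊕ ℤ ≅ ℤ[D_n/⟨σ⟩] ⊕ ℤ[D_n/⟨τ⟩] as ℤ[D_n]-modules. -/
noncomputable def sigmaA (n : ℕ) : MonoidAlgebra ℤ (DihedralGroup n) :=
  MonoidAlgebra.of ℤ (DihedralGroup n) (DihedralGroup.r 1)

noncomputable def tauA (n : ℕ) : MonoidAlgebra ℤ (DihedralGroup n) :=
  MonoidAlgebra.of ℤ (DihedralGroup n) (DihedralGroup.sr 0)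

section aux
variable {n : ℕ} [NeZero n]

lemma of_r_eq (i : ZMod n) :
    MonoidAlgebra.of ℤ (DihedralGroup n) (DihedralGroup.r i) = sigmaA n ^ i.val := by
  rw [sigmaA, ← map_pow, DihedralGroup.r_one_pow, ZMod.natCast_val, ZMod.cast_id]

lemma of_sr_eq (i : ZMod n) :
    MonoidAlgebra.of ℤ (DihedralGroup n) (DihedralGroup.sr i)
      = tauA n * sigmaA n ^ i.val := by
  rw [tauA, ← of_r_eq, ← map_mul, DihedralGroup.sr_mul_r, zero_add]

variable {X Y : Type} [AddCommGroup X]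
    [Module (MonoidAlgebra ℤ (DihedralGroup n)) X]
    [AddCommGroup Y]
    [Module (MonoidAlgebra ℤ (DihedralGroup n)) Y]

/-- `a • ·` as a `ℤ`-linear map (with the canonical `ℤ`-module structures). -/
noncomputable def smulL (a : MonoidAlgebra ℤ (DihedralGroup n)) : X →ₗ[ℤ] X where
  toFun x := a • x
  map_add' := smul_add a
  map_smul' c x := smul_comm a c x

@[simp] lemma smulL_apply (a : MonoidAlgebra ℤ (DihedralGroup n)) (x : X) :
    smulL a x = a • x := rfl

variable [Module ℤ X] [IsScalarTower ℤ (MonoidAlgebra ℤ (DihedralGroup n)) X]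
    [Module ℤ Y] [IsScalarTower ℤ (MonoidAlgebra ℤ (DihedralGroup n)) Y]

lemma equivariant_ext (f : X →ₗ[ℤ] Y)
    (hσ : ∀ x, f (sigmaA n • x) = sigmaA n • f x)
    (hτ : ∀ x, f (tauA n • x) = tauA n • f x)
    (a : MonoidAlgebra ℤ (DihedralGroup n)) (x : X) :
    f (a • x) = a • f x := by
  have hpow : ∀ (k : ℕ) (x : X), f (sigmaA n ^ k • x) = sigmaA n ^ k • f x := by
    intro k
    induction k with
    | zero => simp
    | succ m ih => intro x; rw [pow_succ, mul_smul, ih, hσ, ← mul_smul, ← pow_succ]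
  have hg : ∀ (g : DihedralGroup n) (x : X),
      f (MonoidAlgebra.of ℤ (DihedralGroup n) g • x)
        = MonoidAlgebra.of ℤ (DihedralGroup n) g • f x := by
    intro g x
    cases g with
    | r i => rw [of_r_eq]; exact hpow _ _
    | sr i => rw [of_sr_eq, mul_smul, mul_smul, hτ, hpow]
  induction a using MonoidAlgebra.induction_linear with
  | zero => simp
  | add p q hp hq => rw [add_smul, add_smul, map_add, hp, hq]
  | single g c =>
      have h1 : (MonoidAlgebra.single g c : MonoidAlgebra ℤ (DihedralGroup n))
          = c • MonoidAlgebra.of ℤ (DihedralGroup n) g := by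
        rw [MonoidAlgebra.smul_of]
      rw [h1, smul_assoc, smul_assoc, map_zsmul, hg]

end aux

/-- for odd `n ≥ 3`, `M̃₊ ⊕ ℤ ≅ ℤ[D_n/⟨σ⟩] ⊕ ℤ[D_n/⟨τ⟩]` as
`ℤ[D_n]`-modules.  Here `M̃₊` is any `ℤ[D_n]`-module with a `ℤ`-basis
`w_0, …, w_{n-1}, w` (indexed by `ZMod n ⊕ Unit`) on which `σ` acts by
`w_i ↦ w_{i+1}`, `w ↦ w` and `τ` acts by `w_i ↦ w_{-i}`,
`w ↦ -w + (w_0 + ⋯ + w_{n-1})`; `ℤ` is the trivial lattice of rank one;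
`ℤ[D_n/⟨σ⟩]` is the permutation lattice on the two cosets of `⟨σ⟩`
(`σ` fixes both, `τ` swaps them) and `ℤ[D_n/⟨τ⟩]` is the permutation lattice on
the `n` cosets `σ^i⟨τ⟩` (`σ` acts by `i ↦ i + 1`, `τ` by `i ↦ -i`). -/
theorem Mtildeplus_sum_triv_iso (n : ℕ) (hn : 3 ≤ n) (hodd : Odd n) [NeZero n]
    (M : Type) [AddCommGroup M] [Module ℤ M]
    [Module (MonoidAlgebra ℤ (DihedralGroup n)) M]
    [IsScalarTower ℤ (MonoidAlgebra ℤ (DihedralGroup n)) M]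
    (b : Module.Basis (ZMod n ⊕ Unit) ℤ M)
    (hσ1 : ∀ i : ZMod n, sigmaA n • b (Sum.inl i) = b (Sum.inl (i + 1)))
    (hσ2 : sigmaA n • b (Sum.inr ()) = b (Sum.inr ()))
    (hτ1 : ∀ i : ZMod n, tauA n • b (Sum.inl i) = b (Sum.inl (-i)))
    (hτ2 : tauA n • b (Sum.inr ()) = - b (Sum.inr ()) + ∑ i : ZMod n, b (Sum.inl i))
    (Z : Type) [AddCommGroup Z] [Module ℤ Z]
    [Module (MonoidAlgebra ℤ (DihedralGroup n)) Z]
    [IsScalarTower ℤ (MonoidAlgebra ℤ (DihedralGroup n)) Z]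
    (bz : Module.Basis Unit ℤ Z)
    (hz : ∀ (g : DihedralGroup n) (x : Z), MonoidAlgebra.of ℤ (DihedralGroup n) g • x = x)
    (P : Type) [AddCommGroup P] [Module ℤ P]
    [Module (MonoidAlgebra ℤ (DihedralGroup n)) P]
    [IsScalarTower ℤ (MonoidAlgebra ℤ (DihedralGroup n)) P]
    (bp : Module.Basis Bool ℤ P)
    (hσp : ∀ c : Bool, sigmaA n • bp c = bp c)
    (hτp : ∀ c : Bool, tauA n • bp c = bp (!c))
    (Q : Type) [AddCommGroup Q] [Module ℤ Q]
    [Module (MonoidAlgebra ℤ (DihedralGroup n)) Q]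
    [IsScalarTower ℤ (MonoidAlgebra ℤ (DihedralGroup n)) Q]
    (bq : Module.Basis (ZMod n) ℤ Q)
    (hσq : ∀ i : ZMod n, sigmaA n • bq i = bq (i + 1))
    (hτq : ∀ i : ZMod n, tauA n • bq i = bq (-i)) :
    Nonempty ((M × Z) ≃ₗ[MonoidAlgebra ℤ (DihedralGroup n)] (P × Q)) := by
  obtain ⟨k, hk⟩ := hodd
  letI : Unique (Module ℤ M) := AddCommGroup.uniqueIntModule
  letI : Unique (Module ℤ Z) := AddCommGroup.uniqueIntModule
  letI : Unique (Module ℤ P) := AddCommGroup.uniqueIntModule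
  letI : Unique (Module ℤ Q) := AddCommGroup.uniqueIntModule
  have hM : ‹Module ℤ M› = AddCommGroup.toIntModule M := Subsingleton.elim _ _
  subst hM
  have hZ : ‹Module ℤ Z› = AddCommGroup.toIntModule Z := Subsingleton.elim _ _
  subst hZ
  have hP : ‹Module ℤ P› = AddCommGroup.toIntModule P := Subsingleton.elim _ _
  subst hP
  have hQ : ‹Module ℤ Q› = AddCommGroup.toIntModule Q := Subsingleton.elim _ _
  subst hQ
  -- bases of the products
  set BM := b.prod bz with hBM
  set BP := bp.prod bq with hBP
  -- action on the trivial module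
  have hzσ : ∀ x : Z, sigmaA n • x = x := fun x => hz _ x
  have hzτ : ∀ x : Z, tauA n • x = x := fun x => hz _ x
  -- reindexing lemmas for sums
  have hshiftq : ∑ j : ZMod n, bq (j + 1) = ∑ j : ZMod n, bq j :=
    Fintype.sum_equiv (Equiv.addRight 1) _ _ (fun j => rfl)
  have hnegq : ∑ j : ZMod n, bq (-j) = ∑ j : ZMod n, bq j :=
    Fintype.sum_equiv (Equiv.neg _) _ _ (fun j => rfl)
  have hshiftb : ∑ i : ZMod n, b (Sum.inl (i + 1)) = ∑ i : ZMod n, b (Sum.inl i) :=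
    Fintype.sum_equiv (Equiv.addRight 1) _ _ (fun j => rfl)
  have hnegb : ∑ i : ZMod n, b (Sum.inl (-i)) = ∑ i : ZMod n, b (Sum.inl i) :=
    Fintype.sum_equiv (Equiv.neg _) _ _ (fun j => rfl)
  -- the forward and backward maps
  set F := BM.constr ℤ (Sum.elim (Sum.elim
      (fun i => ((-(bp false) - bp true : P), (bq i + ∑ j : ZMod n, bq j : Q)))
      (fun _ => (((1-(k+1:ℤ)) • bp false - (k+1:ℤ) • bp true : P),
        ((k+1:ℤ) • ∑ j : ZMod n, bq j : Q))))
      (fun _ => ((bp false + bp true : P), (-∑ j : ZMod n, bq j : Q)))) with hF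
  set G := BP.constr ℤ (Sum.elim
      (fun c => if c then ((-b (Sum.inr ()) + ∑ i : ZMod n, b (Sum.inl i) : M),
          ((k+1:ℤ) • bz () : Z))
        else ((b (Sum.inr ()) : M), ((k+1:ℤ) • bz () : Z)))
      (fun i => ((b (Sum.inl i) : M), (bz () : Z)))) with hG
  -- values of F on basis vectors
  have hFwi : ∀ i : ZMod n, F (b (Sum.inl i), 0)
      = (-(bp false) - bp true, bq i + ∑ j : ZMod n, bq j) := by
    intro i
    have : ((b (Sum.inl i), 0) : M × Z) = BM (Sum.inl (Sum.inl i)) := by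
      simp [hBM]
    rw [this, hF, Module.Basis.constr_basis]
    rfl
  have hFw : F (b (Sum.inr ()), 0)
      = ((1-(k+1:ℤ)) • bp false - (k+1:ℤ) • bp true, (k+1:ℤ) • ∑ j : ZMod n, bq j) := by
    have : ((b (Sum.inr ()), 0) : M × Z) = BM (Sum.inl (Sum.inr ())) := by
      simp [hBM]
    rw [this, hF, Module.Basis.constr_basis]
    rfl
  have hFz : F (0, bz ()) = (bp false + bp true, -∑ j : ZMod n, bq j) := by
    have : ((0, bz ()) : M × Z) = BM (Sum.inr ()) := by
      simp [hBM]
    rw [this, hF, Module.Basis.constr_basis]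
    rfl
  -- values of G on basis vectors
  have hGp : ∀ c : Bool, G (bp c, 0)
      = if c then ((-b (Sum.inr ()) + ∑ i : ZMod n, b (Sum.inl i) : M), ((k+1:ℤ) • bz () : Z))
        else ((b (Sum.inr ()) : M), ((k+1:ℤ) • bz () : Z)) := by
    intro c
    have : ((bp c, 0) : P × Q) = BP (Sum.inl c) := by simp [hBP]
    rw [this, hG, Module.Basis.constr_basis]
    rfl
  have hGq : ∀ i : ZMod n, G (0, bq i) = (b (Sum.inl i), bz ()) := by
    intro i
    have : ((0, bq i) : P × Q) = BP (Sum.inr i) := by simp [hBP]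
    rw [this, hG, Module.Basis.constr_basis]
    rfl
  -- derived values of G
  have hGpf : G (bp false, 0) = (b (Sum.inr ()), (k+1:ℤ) • bz ()) := by simpa using hGp false
  have hGpt : G (bp true, 0)
      = (-b (Sum.inr ()) + ∑ i : ZMod n, b (Sum.inl i), (k+1:ℤ) • bz ()) := by
    simpa using hGp true
  -- commuting of algebra smul with integer smul
  have hcP : ∀ (a : MonoidAlgebra ℤ (DihedralGroup n)) (c : ℤ) (x : P),
      a • (c • x) = c • (a • x) := fun a c x => smul_comm a c x
  have hcQ : ∀ (a : MonoidAlgebra ℤ (DihedralGroup n)) (c : ℤ) (x : Q),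
      a • (c • x) = c • (a • x) := fun a c x => smul_comm a c x
  have hcPn : ∀ (a : MonoidAlgebra ℤ (DihedralGroup n)) (c : ℕ) (x : P),
      a • (c • x) = c • (a • x) := fun a c x => smul_comm a c x
  have hcQn : ∀ (a : MonoidAlgebra ℤ (DihedralGroup n)) (c : ℕ) (x : Q),
      a • (c • x) = c • (a • x) := fun a c x => smul_comm a c x
  have hσSq : sigmaA n • ∑ j : ZMod n, bq j = ∑ j : ZMod n, bq j := by
    rw [Finset.smul_sum]; simp only [hσq]; exact hshiftq
  have hτSq : tauA n • ∑ j : ZMod n, bq j = ∑ j : ZMod n, bq j := by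
    rw [Finset.smul_sum]; simp only [hτq]; exact hnegq
  -- pair sums
  have hqsum : ∑ j : ZMod n, (((0 : P), bq j) : P × Q) = (((0 : P), ∑ j : ZMod n, bq j) : P × Q) := by
    rw [← prod_mk_sum]; simp
  have hbsum : ∑ i : ZMod n, ((b (Sum.inl i), (0:Z)) : M × Z)
      = ((∑ i : ZMod n, b (Sum.inl i), (0:Z)) : M × Z) := by
    rw [← prod_mk_sum]; simp
  have hncast : ((n:ℕ):ℤ) = 2*(k:ℤ)+1 := by rw [hk]; push_cast; ring
  have hGsum : ∑ j : ZMod n, ((b (Sum.inl j), bz ()) : M × Z)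
      = ((∑ j : ZMod n, b (Sum.inl j), ((n:ℕ):ℤ) • bz ()) : M × Z) := by
    rw [← prod_mk_sum]
    congr 1
    rw [Finset.sum_const, Finset.card_univ, ZMod.card, ← Nat.cast_smul_eq_nsmul ℤ]
  have hFsum : ∑ i : ZMod n, ((-bp false - bp true, bq i + ∑ j : ZMod n, bq j) : P × Q)
      = ((((n:ℕ):ℤ) • (-bp false - bp true) : P),
          (∑ i : ZMod n, bq i + ((n:ℕ):ℤ) • ∑ j : ZMod n, bq j : Q)) := by
    rw [← prod_mk_sum]
    refine Prod.ext ?_ ?_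
    · show (∑ _i : ZMod n, (-bp false - bp true)) = _
      rw [Finset.sum_const, Finset.card_univ, ZMod.card, ← Nat.cast_smul_eq_nsmul ℤ]
    · show (∑ i : ZMod n, (bq i + ∑ j : ZMod n, bq j)) = _
      rw [Finset.sum_add_distrib, Finset.sum_const, Finset.card_univ, ZMod.card,
        ← Nat.cast_smul_eq_nsmul ℤ]
  -- basis vectors of BM / BP as explicit pairs
  have hbmi : ∀ i : ZMod n, BM (Sum.inl (Sum.inl i)) = ((b (Sum.inl i), 0) : M × Z) := by
    intro i; simp [hBM]
  have hbmw : BM (Sum.inl (Sum.inr ())) = ((b (Sum.inr ()), 0) : M × Z) := by simp [hBM]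
  have hbmz : BM (Sum.inr ()) = (((0:M), bz ()) : M × Z) := by simp [hBM]
  have hbpc : ∀ c : Bool, BP (Sum.inl c) = ((bp c, 0) : P × Q) := by intro c; simp [hBP]
  have hbpq : ∀ i : ZMod n, BP (Sum.inr i) = (((0:P), bq i) : P × Q) := by intro i; simp [hBP]
  -- σ-equivariance of F
  have hσF : ∀ x : M × Z, F (sigmaA n • x) = sigmaA n • F x := by
    have h : F.comp (smulL (sigmaA n)) = (smulL (sigmaA n)).comp F := by
      apply BM.ext
      rintro ((i | ⟨⟩) | ⟨⟩)
      · have hs : sigmaA n • ((b (Sum.inl i), 0) : M × Z) = ((b (Sum.inl (i+1)), 0) : M × Z) :=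
          Prod.ext (by simpa using hσ1 i) (by simp)
        rw [LinearMap.comp_apply, LinearMap.comp_apply, smulL_apply, smulL_apply, hbmi, hs,
          hFwi, hFwi]
        refine Prod.ext ?_ ?_
        · simp [smul_sub, hσp]
        · simp [smul_add, hσq, hσSq]
      · have hs : sigmaA n • ((b (Sum.inr ()), 0) : M × Z) = ((b (Sum.inr ()), 0) : M × Z) :=
          Prod.ext (by simpa using hσ2) (by simp)
        rw [LinearMap.comp_apply, LinearMap.comp_apply, smulL_apply, smulL_apply, hbmw, hs,
          hFw]
        refine Prod.ext ?_ ?_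
        · simp [smul_sub, hcP, hcPn, hσp]
        · simp [hcQ, hcQn, hσSq]
      · have hs : sigmaA n • (((0:M), bz ()) : M × Z) = (((0:M), bz ()) : M × Z) :=
          Prod.ext (by simp) (by simpa using hzσ (bz ()))
        rw [LinearMap.comp_apply, LinearMap.comp_apply, smulL_apply, smulL_apply, hbmz, hs,
          hFz]
        refine Prod.ext ?_ ?_
        · simp [smul_add, hσp]
        · simp [smul_neg, hσSq]
    exact fun x => DFunLike.congr_fun h x
  -- τ-equivariance of F
  have hτF : ∀ x : M × Z, F (tauA n • x) = tauA n • F x := by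
    have h : F.comp (smulL (tauA n)) = (smulL (tauA n)).comp F := by
      apply BM.ext
      rintro ((i | ⟨⟩) | ⟨⟩)
      · have hs : tauA n • ((b (Sum.inl i), 0) : M × Z) = ((b (Sum.inl (-i)), 0) : M × Z) :=
          Prod.ext (by simpa using hτ1 i) (by simp)
        rw [LinearMap.comp_apply, LinearMap.comp_apply, smulL_apply, smulL_apply, hbmi, hs,
          hFwi, hFwi]
        refine Prod.ext ?_ ?_
        · simp only [Prod.smul_fst, smul_sub, smul_neg, hτp, Bool.not_false, Bool.not_true]
          abel
        · simp [smul_add, hτq, hτSq]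
      · have hs : tauA n • ((b (Sum.inr ()), 0) : M × Z)
            = ((-b (Sum.inr ()) + ∑ i : ZMod n, b (Sum.inl i), 0) : M × Z) :=
          Prod.ext (by simpa using hτ2) (by simp)
        have hdec : ((-b (Sum.inr ()) + ∑ i : ZMod n, b (Sum.inl i), 0) : M × Z)
            = -((b (Sum.inr ()), 0) : M × Z) + ∑ i : ZMod n, ((b (Sum.inl i), 0) : M × Z) := by
          rw [hbsum]; exact Prod.ext (by simp) (by simp)
        rw [LinearMap.comp_apply, LinearMap.comp_apply, smulL_apply, smulL_apply, hbmw, hs, hdec,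
          map_add, map_neg, map_sum, hFw]
        simp only [hFwi]
        rw [hFsum]
        refine Prod.ext ?_ ?_
        · simp only [Prod.smul_fst, Prod.fst_add, Prod.fst_neg, Prod.mk_add_mk, Prod.neg_mk,
            smul_sub, hcP, hcPn, hτp, Bool.not_false, Bool.not_true]
          push_cast [hncast]
          module
        · simp only [Prod.smul_snd, Prod.snd_add, Prod.snd_neg, Prod.mk_add_mk, Prod.neg_mk,
            hcQ, hcQn, hτSq]
          push_cast [hncast]
          module
      · have hs : tauA n • (((0:M), bz ()) : M × Z) = (((0:M), bz ()) : M × Z) :=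
          Prod.ext (by simp) (by simpa using hzτ (bz ()))
        rw [LinearMap.comp_apply, LinearMap.comp_apply, smulL_apply, smulL_apply, hbmz, hs,
          hFz]
        refine Prod.ext ?_ ?_
        · simp only [Prod.smul_fst, smul_add, hτp, Bool.not_false, Bool.not_true]
          abel
        · simp [smul_neg, hτSq]
    exact fun x => DFunLike.congr_fun h x
  -- G ∘ F = id
  have hGF : G.comp F = LinearMap.id := by
    apply BM.ext
    rintro ((i | ⟨⟩) | ⟨⟩)
    · have hdec : ((-bp false - bp true, bq i + ∑ j : ZMod n, bq j) : P × Q)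
          = -((bp false, 0) : P × Q) - (bp true, 0) + (0, bq i)
            + ∑ j : ZMod n, (((0:P), bq j) : P × Q) := by
        rw [hqsum]; exact Prod.ext (by simp) (by simp [add_comm])
      rw [LinearMap.comp_apply, LinearMap.id_apply, hbmi, hFwi, hdec, map_add, map_add, map_sub,
        map_neg, map_sum, hGpf, hGpt, hGq]
      simp only [hGq]
      rw [hGsum]
      refine Prod.ext ?_ ?_
      · simp only [Prod.fst_add, Prod.fst_sub, Prod.fst_neg, Prod.mk_add_mk, Prod.neg_mk,
          Prod.mk_sub_mk]
        module
      · simp only [Prod.snd_add, Prod.snd_sub, Prod.snd_neg, Prod.mk_add_mk, Prod.neg_mk,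
          Prod.mk_sub_mk]
        push_cast [hncast]
        module
    · have hdec : (((1-(k+1:ℤ)) • bp false - (k+1:ℤ) • bp true, (k+1:ℤ) • ∑ j : ZMod n, bq j)
            : P × Q)
          = (1-(k+1:ℤ)) • ((bp false, 0) : P × Q) - (k+1:ℤ) • ((bp true, 0) : P × Q)
            + (k+1:ℤ) • ∑ j : ZMod n, (((0:P), bq j) : P × Q) := by
        rw [hqsum]; exact Prod.ext (by simp) (by simp)
      rw [LinearMap.comp_apply, LinearMap.id_apply, hbmw, hFw, hdec, map_add, map_sub,
        LinearMap.map_smul_of_tower, LinearMap.map_smul_of_tower, LinearMap.map_smul_of_tower, map_sum, hGpf, hGpt]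
      simp only [hGq]
      rw [hGsum]
      refine Prod.ext ?_ ?_
      · simp only [Prod.fst_add, Prod.fst_sub, Prod.smul_fst, Prod.mk_add_mk, Prod.neg_mk,
          Prod.mk_sub_mk, Prod.smul_mk]
        module
      · simp only [Prod.snd_add, Prod.snd_sub, Prod.smul_snd, Prod.mk_add_mk, Prod.neg_mk,
          Prod.mk_sub_mk, Prod.smul_mk]
        push_cast [hncast]
        module
    · have hdec : ((bp false + bp true, -∑ j : ZMod n, bq j) : P × Q)
          = ((bp false, 0) : P × Q) + ((bp true, 0) : P × Q)
            - ∑ j : ZMod n, (((0:P), bq j) : P × Q) := by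
        rw [hqsum]; exact Prod.ext (by simp) (by simp [sub_eq_add_neg])
      rw [LinearMap.comp_apply, LinearMap.id_apply, hbmz, hFz, hdec, map_sub, map_add,
        hGpf, hGpt, map_sum G]
      simp only [hGq]
      rw [hGsum]
      refine Prod.ext ?_ ?_
      · simp only [Prod.fst_add, Prod.fst_sub, Prod.mk_add_mk, Prod.mk_sub_mk]
        module
      · simp only [Prod.snd_add, Prod.snd_sub, Prod.mk_add_mk, Prod.mk_sub_mk]
        push_cast [hncast]
        module
  -- F ∘ G = id
  have hFG : F.comp G = LinearMap.id := by
    apply BP.ext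
    rintro (c | i)
    · cases c
      · have hdec : ((b (Sum.inr ()), (k+1:ℤ) • bz ()) : M × Z)
            = ((b (Sum.inr ()), 0) : M × Z) + (k+1:ℤ) • (((0:M), bz ()) : M × Z) := by
          exact Prod.ext (by simp) (by simp)
        rw [LinearMap.comp_apply, LinearMap.id_apply, hbpc, hGpf, hdec, map_add,
          LinearMap.map_smul_of_tower, hFw, hFz]
        refine Prod.ext ?_ ?_
        · simp only [Prod.fst_add, Prod.smul_fst, Prod.mk_add_mk, Prod.smul_mk]
          module
        · simp only [Prod.snd_add, Prod.smul_snd, Prod.mk_add_mk, Prod.smul_mk]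
          module
      · have hdec : ((-b (Sum.inr ()) + ∑ i : ZMod n, b (Sum.inl i), (k+1:ℤ) • bz ()) : M × Z)
            = -((b (Sum.inr ()), 0) : M × Z) + ∑ i : ZMod n, ((b (Sum.inl i), 0) : M × Z)
              + (k+1:ℤ) • (((0:M), bz ()) : M × Z) := by
          rw [hbsum]; exact Prod.ext (by simp) (by simp)
        rw [LinearMap.comp_apply, LinearMap.id_apply, hbpc, hGpt, hdec, map_add, map_add,
          map_neg, LinearMap.map_smul_of_tower, map_sum, hFw, hFz]
        simp only [hFwi]
        rw [hFsum]
        refine Prod.ext ?_ ?_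
        · simp only [Prod.fst_add, Prod.fst_neg, Prod.smul_fst, Prod.mk_add_mk, Prod.neg_mk,
            Prod.smul_mk]
          push_cast [hncast]
          module
        · simp only [Prod.snd_add, Prod.snd_neg, Prod.smul_snd, Prod.mk_add_mk, Prod.neg_mk,
            Prod.smul_mk]
          push_cast [hncast]
          module
    · have hdec : ((b (Sum.inl i), bz ()) : M × Z)
          = ((b (Sum.inl i), 0) : M × Z) + (((0:M), bz ()) : M × Z) := by
        exact Prod.ext (by simp) (by simp)
      rw [LinearMap.comp_apply, LinearMap.id_apply, hbpq, hGq, hdec, map_add, hFwi, hFz]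
      refine Prod.ext ?_ ?_
      · simp only [Prod.fst_add, Prod.mk_add_mk]
        module
      · simp only [Prod.snd_add, Prod.mk_add_mk]
        module
  exact ⟨{ toFun := F, map_add' := F.map_add,
           map_smul' := fun a x => equivariant_ext F hσF hτF a x,
           invFun := G,
           left_inv := fun x => DFunLike.congr_fun hGF x,
           right_inv := fun x => DFunLike.congr_fun hFG x }⟩
end

section
/- Let n ≥ 3 be an odd integer. The determinant of the n × n circulant integer matrix Circ(c_0, …, c_{n−1}) with c_0 = c_1 = ⋯ = c_{(n−3)/2} = 1 (that is, the first (n−1)/2 entries equal to 1) and all remaining entries equal to 0 is (n−1)/2. -/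
open Matrix Finset

section Aux

variable {n : ℕ} [NeZero n]

/-- The equivalence between `Fin n` and `ZMod n`. -/
def finZModEquiv (n : ℕ) [NeZero n] : Fin n ≃ ZMod n where
  toFun i := (i : ℕ)
  invFun k := ⟨k.val, k.val_lt⟩
  left_inv i := by
    ext
    simp [ZMod.val_natCast_of_lt i.isLt]
  right_inv k := by
    simp [ZMod.natCast_rightInverse k]

lemma finZModEquiv_val (i : Fin n) : ((finZModEquiv n i).val) = (i : ℕ) := by
  simp [finZModEquiv, ZMod.val_natCast_of_lt i.isLt]

lemma circulant_det_complex {ζ : ℂ} (hζ : IsPrimitiveRoot ζ n) (c : ZMod n → ℂ) :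
    (circulant c).det
      = ∏ j : ZMod n, ∑ d : ZMod n, c d * (AddChar.zmodChar n hζ.pow_eq_one) (-(d * j)) := by
  set ψ := AddChar.zmodChar n hζ.pow_eq_one with hψ
  set V : Matrix (ZMod n) (ZMod n) ℂ := Matrix.of (fun k j => ψ (k * j)) with hV
  set lam : ZMod n → ℂ := fun j => ∑ d : ZMod n, c d * ψ (-(d * j)) with hlam
  have key : circulant c * V = V * diagonal lam := by
    ext i j
    rw [Matrix.mul_apply, Matrix.mul_diagonal]
    have h1 : ∑ k : ZMod n, circulant c i k * V k j
        = ∑ d : ZMod n, circulant c i (i - d) * V (i - d) j :=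
      (Fintype.sum_equiv (Equiv.subLeft i) _ _ (fun d => rfl)).symm
    rw [h1]
    have h2 : ∀ d : ZMod n, circulant c i (i - d) * V (i - d) j
        = V i j * (c d * ψ (-(d * j))) := by
      intro d
      simp only [circulant_apply, sub_sub_cancel, hV, Matrix.of_apply]
      have h3 : (i - d) * j = i * j + (-(d * j)) := by ring
      rw [h3, AddChar.map_add_eq_mul]
      ring
    simp only [h2, ← Finset.mul_sum, hlam]
  have hdetV : V.det ≠ 0 := by
    have hsub : V.submatrix (finZModEquiv n) (finZModEquiv n)
        = Matrix.vandermonde (fun i : Fin n => ζ ^ (i : ℕ)) := by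
      ext i j
      simp only [Matrix.submatrix_apply, hV, Matrix.of_apply, Matrix.vandermonde_apply]
      have : finZModEquiv n i * finZModEquiv n j = (((i : ℕ) * (j : ℕ) : ℕ) : ZMod n) := by
        simp [finZModEquiv]
      rw [this, AddChar.zmodChar_apply' hζ.pow_eq_one, pow_mul]
    have : V.det = ∏ i : Fin n, ∏ j ∈ Finset.Ioi i, (ζ ^ (j : ℕ) - ζ ^ (i : ℕ)) := by
      rw [← Matrix.det_submatrix_equiv_self (finZModEquiv n) V, hsub, Matrix.det_vandermonde]
    rw [this]
    apply Finset.prod_ne_zero_iff.mpr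
    intro i _
    apply Finset.prod_ne_zero_iff.mpr
    intro j hj
    rw [Finset.mem_Ioi] at hj
    intro h
    have := hζ.pow_inj j.isLt i.isLt (sub_eq_zero.mp h)
    exact absurd (Fin.val_injective this) hj.ne'
  have hdet : (circulant c).det * V.det = V.det * ∏ j : ZMod n, lam j := by
    rw [← Matrix.det_mul, key, Matrix.det_mul, Matrix.det_diagonal]
  rw [mul_comm] at hdet
  exact mul_left_cancel₀ hdetV hdet

end Aux

/-- for odd `n ≥ 3`, the determinant of the `n × n` circulant integer
matrix whose first `(n-1)/2` entries (indices `0, …, (n-3)/2`) are `1` and whose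
remaining entries are `0` equals `(n-1)/2`.  The `(i, j)` entry of the circulant
matrix is `c (i - j)` with indices in `ZMod n`. -/
theorem circulant_det_first_half_ones (n : ℕ) (hn : 3 ≤ n) (hodd : Odd n) [NeZero n] :
    (Matrix.circulant fun k : ZMod n => if k.val < (n - 1) / 2 then (1 : ℤ) else 0).det
      = ((n - 1) / 2 : ℕ) := by
  set m : ℕ := (n - 1) / 2 with hm
  obtain ⟨t, ht⟩ := hodd
  have hmn : n = 2 * m + 1 := by omega
  have hm1 : 1 ≤ m := by omega
  -- pass to ℂ
  set ζ : ℂ := Complex.exp (2 * Real.pi * Complex.I / n) with hζdef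
  have hζ : IsPrimitiveRoot ζ n := Complex.isPrimitiveRoot_exp n (NeZero.ne n)
  set ψ := AddChar.zmodChar n hζ.pow_eq_one with hψ
  set c : ZMod n → ℂ := fun k => if k.val < m then (1 : ℂ) else 0 with hc
  -- the complex determinant
  have hCdet : (Matrix.circulant c).det = (m : ℂ) := by
    rw [circulant_det_complex hζ c]
    -- compute each eigenvalue as a geometric sum
    have hlam : ∀ j : ZMod n, (∑ d : ZMod n, c d * ψ (-(d * j)))
        = ∑ i ∈ Finset.range m, (ψ (-j)) ^ i := by
      intro j
      have h1 : ∀ d : ZMod n, c d * ψ (-(d * j))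
          = if d.val < m then (ψ (-j)) ^ d.val else 0 := by
        intro d
        have hd : -(d * j) = d.val • (-j) := by
          rw [nsmul_eq_mul, ZMod.natCast_rightInverse d]
          ring
        rw [hd, AddChar.map_nsmul_eq_pow, hc]
        by_cases h : d.val < m <;> simp [h]
      simp only [h1]
      rw [← Equiv.sum_comp (finZModEquiv n)]
      have h2 : ∀ i : Fin n, (if (finZModEquiv n i).val < m then (ψ (-j)) ^ (finZModEquiv n i).val else 0)
          = if (i : ℕ) < m then (ψ (-j)) ^ (i : ℕ) else 0 := by
        intro i; rw [finZModEquiv_val]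
      simp only [h2]
      rw [Fin.sum_univ_eq_sum_range (fun i => if i < m then (ψ (-j)) ^ i else 0)]
      rw [← Finset.sum_filter]
      congr 1
      ext i
      simp only [Finset.mem_filter, Finset.mem_range]
      omega
    rw [Finset.prod_congr rfl fun j _ => hlam j]
    -- split off j = 0
    rw [← Finset.mul_prod_erase Finset.univ _ (Finset.mem_univ (0 : ZMod n))]
    have h0 : (∑ i ∈ Finset.range m, (ψ (-(0 : ZMod n))) ^ i) = (m : ℂ) := by
      simp
    rw [h0]
    -- show the remaining product is 1
    set P : ℂ := ∏ j ∈ Finset.univ.erase (0 : ZMod n), ∑ i ∈ Finset.range m, (ψ (-j)) ^ i with hP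
    set Q : ℂ := ∏ j ∈ Finset.univ.erase (0 : ZMod n), ((ψ (-j)) - 1) with hQ
    have hψne : ∀ j : ZMod n, j ≠ 0 → ψ (-j) ≠ 1 := by
      intro j hj
      have hnej : (-j : ZMod n) ≠ 0 := neg_ne_zero.mpr hj
      have hval : 0 < (-j).val := by
        rcases Nat.eq_zero_or_pos (-j).val with h | h
        · exact absurd ((ZMod.val_eq_zero _).mp h) hnej
        · exact h
      have := hζ.pow_ne_one_of_pos_of_lt hval.ne' (ZMod.val_lt (-j))
      simpa [hψ, AddChar.zmodChar_apply] using this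
    have hQne : Q ≠ 0 := by
      rw [hQ]
      apply Finset.prod_ne_zero_iff.mpr
      intro j hj
      rw [Finset.mem_erase] at hj
      exact sub_ne_zero.mpr (hψne j hj.1)
    have hPQ : P * Q = Q := by
      rw [hP, hQ, ← Finset.prod_mul_distrib]
      have h3 : ∀ j : ZMod n, (∑ i ∈ Finset.range m, (ψ (-j)) ^ i) * ((ψ (-j)) - 1)
          = (ψ (-((m : ZMod n) * j))) - 1 := by
        intro j
        rw [geom_sum_mul]
        congr 1
        rw [← AddChar.map_nsmul_eq_pow]
        congr 1
        rw [nsmul_eq_mul]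
        ring
      rw [Finset.prod_congr rfl fun j _ => h3 j]
      -- reindex by multiplication by the unit m
      have hu : (m : ZMod n) * (-2) = 1 := by
        have hcast : ((2 * m + 1 : ℕ) : ZMod n) = 0 := by
          rw [← hmn, ZMod.natCast_self]
        push_cast at hcast
        linear_combination -hcast
      have hu' : (-2 : ZMod n) * (m : ℕ) = 1 := by rw [mul_comm]; exact hu
      refine Finset.prod_nbij' (fun j => (m : ZMod n) * j) (fun j => (-2 : ZMod n) * j) ?_ ?_ ?_ ?_ ?_
      · intro j hj
        rw [Finset.mem_erase] at hj ⊢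
        refine ⟨?_, Finset.mem_univ _⟩
        intro h
        apply hj.1
        calc j = 1 * j := (one_mul j).symm
        _ = (-2 : ZMod n) * ((m : ZMod n) * j) := by rw [← hu']; ring
        _ = 0 := by rw [show (m : ZMod n) * j = 0 from h, mul_zero]
      · intro j hj
        rw [Finset.mem_erase] at hj ⊢
        refine ⟨?_, Finset.mem_univ _⟩
        intro h
        apply hj.1
        calc j = 1 * j := (one_mul j).symm
        _ = (m : ZMod n) * ((-2 : ZMod n) * j) := by rw [← hu]; ring
        _ = 0 := by rw [show (-2 : ZMod n) * j = 0 from h, mul_zero]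
      · intro j _
        calc (-2 : ZMod n) * ((m : ZMod n) * j) = ((m : ZMod n) * (-2)) * j := by ring
        _ = j := by rw [hu, one_mul]
      · intro j _
        calc (m : ZMod n) * ((-2 : ZMod n) * j) = ((m : ZMod n) * (-2)) * j := by ring
        _ = j := by rw [hu, one_mul]
      · intro j _
        rfl
    have hPone : P = 1 := by
      have := mul_right_cancel₀ hQne (by rw [hPQ, one_mul] : P * Q = 1 * Q)
      exact this
    rw [hPone, mul_one]
  -- descend to ℤ
  have hmap : ((Matrix.circulant fun k : ZMod n => if k.val < m then (1 : ℤ) else 0).map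
      (Int.cast : ℤ → ℂ)) = Matrix.circulant c := by
    rw [Matrix.map_circulant]
    funext k
    by_cases h : k.val < m <;> simp [h, hc]
  have := RingHom.map_det (Int.castRingHom ℂ)
      (Matrix.circulant fun k : ZMod n => if k.val < m then (1 : ℤ) else 0)
  rw [RingHom.mapMatrix_apply] at this
  have hZ : (((Matrix.circulant fun k : ZMod n => if k.val < m then (1 : ℤ) else 0).det : ℤ) : ℂ)
      = (m : ℂ) := by
    rw [show ((Int.castRingHom ℂ) : ℤ → ℂ) = (Int.cast : ℤ → ℂ) from rfl] at this
    rw [this, hmap, hCdet]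
  exact_mod_cast hZ
end

section
/- Let n ≥ 3 be an odd integer. The determinant of the n × n circulant integer matrix Circ(c_0, …, c_{n−1}) with c_0 = ⋯ = c_{(n−3)/2} = −1 (the first (n−1)/2 entries equal to −1), c_{(n−1)/2} = 0, c_{(n+1)/2} = ⋯ = c_{n−2} = 1 (the next (n−3)/2 entries equal to 1), and c_{n−1} = 0, is −1. -/
open Finset Polynomial

namespace CircAux

noncomputable def cc (m t : ℕ) : ℂ :=
  if t < m then -1 else if m + 1 ≤ t ∧ t ≤ 2 * m - 1 then 1 else 0

noncomputable def fz (m : ℕ) (z : ℂ) : ℂ := ∑ t ∈ range (2 * m + 1), cc m t * z ^ t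

variable {ζ : ℂ} {n m : ℕ}

lemma hpow (hζ : IsPrimitiveRoot ζ n) (a : ℕ) : ζ ^ (a % n) = ζ ^ a := by
  conv_rhs => rw [← Nat.div_add_mod a n]
  rw [pow_add, pow_mul, hζ.pow_eq_one, one_pow, one_mul]

lemma prod_range_eq (hn : 0 < n) (hζ : IsPrimitiveRoot ζ n) :
    ∏ k ∈ range n, (X - C (ζ ^ k)) = X ^ n - 1 := by
  rw [X_pow_sub_one_eq_prod hn hζ]
  refine Finset.prod_nbij (fun k => ζ ^ k) ?_ ?_ ?_ ?_
  · intro a _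
    exact (Polynomial.mem_nthRootsFinset hn _).2
      (by rw [← pow_mul, mul_comm, pow_mul, hζ.pow_eq_one, one_pow])
  · intro a ha b hb hab
    exact hζ.pow_inj (mem_range.1 ha) (mem_range.1 hb) hab
  · intro x hx
    have : NeZero n := ⟨hn.ne'⟩
    obtain ⟨i, hi, rfl⟩ := hζ.eq_pow_of_pow_eq_one ((Polynomial.mem_nthRootsFinset hn _).1 hx)
    exact ⟨i, Finset.mem_coe.2 (mem_range.2 hi), rfl⟩
  · intro a _; rfl

lemma prod_Ico_eval (hn : 0 < n) (hζ : IsPrimitiveRoot ζ n) (a : ℂ) :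
    ∏ k ∈ Ico 1 n, (a - ζ ^ k) = ∑ i ∈ range n, a ^ i := by
  have h0 := prod_range_eq hn hζ
  rw [Finset.range_eq_Ico, Finset.prod_eq_prod_Ico_succ_bot hn] at h0
  have h1 : (X - C (1 : ℂ)) * ∏ k ∈ Ico 1 n, (X - C (ζ ^ k)) = X ^ n - 1 := by
    simpa using h0
  have h2 : (X - C (1 : ℂ)) * ∑ i ∈ range n, (X : ℂ[X]) ^ i = X ^ n - 1 := by
    rw [mul_comm]; simpa using geom_sum_mul (X : ℂ[X]) n
  have h3 := mul_left_cancel₀ (Polynomial.X_sub_C_ne_zero (1 : ℂ)) (h1.trans h2.symm)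
  have := congrArg (Polynomial.eval a) h3
  simpa [Polynomial.eval_prod] using this





variable {ζ : ℂ} {n m : ℕ}

lemma fz_eq (hm : 1 ≤ m) (z : ℂ) :
    fz m z = -(∑ t ∈ range m, z ^ t) + z ^ (m + 1) * ∑ t ∈ range (m - 1), z ^ t := by
  unfold fz
  rw [range_eq_Ico, ← Finset.sum_Ico_consecutive _ (Nat.zero_le m) (by omega : m ≤ 2 * m + 1),
    ← Finset.sum_Ico_consecutive _ (by omega : m ≤ m + 1) (by omega : m + 1 ≤ 2 * m + 1),
    ← Finset.sum_Ico_consecutive _ (by omega : m + 1 ≤ 2 * m) (by omega : 2 * m ≤ 2 * m + 1)]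
  have h1 : ∑ t ∈ Ico 0 m, cc m t * z ^ t = -(∑ t ∈ range m, z ^ t) := by
    rw [← Finset.sum_neg_distrib, range_eq_Ico]
    refine Finset.sum_congr rfl fun t ht => ?_
    rw [cc, if_pos (mem_Ico.1 ht).2]; ring
  have h2 : ∑ t ∈ Ico m (m + 1), cc m t * z ^ t = 0 := by
    rw [Nat.Ico_succ_singleton, Finset.sum_singleton, cc,
      if_neg (lt_irrefl m), if_neg (by omega)]
    ring
  have h3 : ∑ t ∈ Ico (2 * m) (2 * m + 1), cc m t * z ^ t = 0 := by
    rw [Nat.Ico_succ_singleton, Finset.sum_singleton, cc,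
      if_neg (by omega), if_neg (by omega)]
    ring
  have h4 : ∑ t ∈ Ico (m + 1) (2 * m), cc m t * z ^ t
      = z ^ (m + 1) * ∑ t ∈ range (m - 1), z ^ t := by
    have : ∀ t ∈ Ico (m + 1) (2 * m), cc m t * z ^ t = z ^ t := by
      intro t ht
      have ht' := mem_Ico.1 ht
      rw [cc, if_neg (by omega), if_pos (by omega)]; ring
    rw [Finset.sum_congr rfl this, Finset.sum_Ico_eq_sum_range]
    rw [show 2 * m - (m + 1) = m - 1 by omega, Finset.mul_sum]
    exact Finset.sum_congr rfl fun t _ => by rw [← pow_add]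
  rw [h1, h2, h3, h4]; simp only [range_eq_Ico]; ring

lemma fz_one (hm : 1 ≤ m) : fz m 1 = -1 := by
  rw [fz_eq hm]
  simp only [one_pow, Finset.sum_const, card_range, nsmul_eq_mul, mul_one, one_mul]
  have : ((m - 1 : ℕ) : ℂ) = (m : ℂ) - 1 := by
    push_cast [hm]; ring
  rw [this]; ring

lemma key (hm : 1 ≤ m) {z : ℂ} (hz : z ^ (2 * m + 1) = 1) :
    z * (z - 1) * fz m z = -((z + 1) * (z ^ (m + 1) - 1)) := by
  have e2 : z ^ (m + 1) = z ^ (m - 1) * z ^ 2 := by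
    rw [← pow_add, show m - 1 + 2 = m + 1 by omega]
  have e3 : z ^ (m - 1) * z ^ (m - 1) * z ^ 3 = 1 := by
    rw [← pow_add, ← pow_add, show m - 1 + (m - 1) + 3 = 2 * m + 1 by omega]; exact hz
  have h1 : (∑ t ∈ range m, z ^ t) * (z - 1) = z ^ (m - 1) * z - 1 := by
    rw [geom_sum_mul, ← pow_succ, show m - 1 + 1 = m by omega]
  have h2 : (∑ t ∈ range (m - 1), z ^ t) * (z - 1) = z ^ (m - 1) - 1 := geom_sum_mul z (m - 1)
  rw [fz_eq hm, e2]
  linear_combination (-z) * h1 + z ^ (m - 1) * z ^ 3 * h2 + e3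


lemma prod_f (hm : 1 ≤ m) (hζ : IsPrimitiveRoot ζ (2 * m + 1)) :
    ∏ k ∈ range (2 * m + 1), fz m (ζ ^ k) = -1 := by
  set n := 2 * m + 1 with hn_def
  have hn : 0 < n := by omega
  have hq := prod_Ico_eval hn hζ
  have hcard : (Ico 1 n).card = n - 1 := by simp
  have hsign : ((-1 : ℂ)) ^ (Ico 1 n).card = 1 := by
    rw [hcard, show n - 1 = 2 * m by omega, pow_mul]; norm_num
  -- ∏ (ζ^k - 1) = n
  have hA : ∏ k ∈ Ico 1 n, (ζ ^ k - 1) = (n : ℂ) := by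
    have h := hq 1
    calc ∏ k ∈ Ico 1 n, (ζ ^ k - 1) = ∏ k ∈ Ico 1 n, (-1) * ((1 : ℂ) - ζ ^ k) :=
          Finset.prod_congr rfl fun k _ => by ring
      _ = ((-1 : ℂ)) ^ (Ico 1 n).card * ∏ k ∈ Ico 1 n, ((1 : ℂ) - ζ ^ k) := by
          rw [Finset.prod_mul_distrib, Finset.prod_const]
      _ = (n : ℂ) := by rw [hsign, h]; simp
  -- ∏ (ζ^k + 1) = 1
  have hB : ∏ k ∈ Ico 1 n, (ζ ^ k + 1) = 1 := by
    have h := hq (-1)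
    calc ∏ k ∈ Ico 1 n, (ζ ^ k + 1) = ∏ k ∈ Ico 1 n, (-1) * ((-1 : ℂ) - ζ ^ k) :=
          Finset.prod_congr rfl fun k _ => by ring
      _ = ((-1 : ℂ)) ^ (Ico 1 n).card * ∏ k ∈ Ico 1 n, ((-1 : ℂ) - ζ ^ k) := by
          rw [Finset.prod_mul_distrib, Finset.prod_const]
      _ = 1 := by
          rw [hsign, h, one_mul, neg_one_geom_sum, if_neg (by simp [hn_def, Nat.even_add_one, parity_simps])]
  -- ∏ ζ^k = 1
  have hC : ∏ k ∈ Ico 1 n, ζ ^ k = 1 := by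
    rw [Finset.prod_pow_eq_pow_sum]
    have h1 : ∑ k ∈ Ico 1 n, k = ∑ k ∈ range n, k := by
      rw [range_eq_Ico, Finset.sum_eq_sum_Ico_succ_bot hn]; simp
    have h2 : ∑ k ∈ range n, k = n * m := by
      rw [Finset.sum_range_id, show n - 1 = 2 * m by omega,
        show n * (2 * m) = n * m * 2 by ring, Nat.mul_div_cancel _ two_pos]
    rw [h1, h2, pow_mul, hζ.pow_eq_one, one_pow]
  -- reindexing product
  have hD : ∏ k ∈ Ico 1 n, (ζ ^ (k * (m + 1)) - 1) = ∏ k ∈ Ico 1 n, (ζ ^ k - 1) := by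
    refine Finset.prod_nbij' (fun k => k * (m + 1) % n) (fun k => k * 2 % n) ?_ ?_ ?_ ?_ ?_
    · intro k hk
      have hk' := mem_Ico.1 hk
      refine mem_Ico.2 ⟨?_, Nat.mod_lt _ hn⟩
      rcases Nat.eq_zero_or_pos (k * (m + 1) % n) with h0 | h0
      · exfalso
        have hdvd : n ∣ k * (m + 1) := Nat.dvd_of_mod_eq_zero h0
        have hdvd2 : n ∣ k * n + k := by
          have : k * (m + 1) * 2 = k * n + k := by rw [hn_def]; ring
          simpa [this] using hdvd.mul_right 2
        have : n ∣ k := (Nat.dvd_add_right (Dvd.intro_left k rfl)).mp hdvd2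
        have := Nat.le_of_dvd (by omega) this
        omega
      · exact h0
    · intro k hk
      have hk' := mem_Ico.1 hk
      refine mem_Ico.2 ⟨?_, Nat.mod_lt _ hn⟩
      rcases Nat.eq_zero_or_pos (k * 2 % n) with h0 | h0
      · exfalso
        have hdvd : n ∣ k * 2 := Nat.dvd_of_mod_eq_zero h0
        have hdvd2 : n ∣ k * n + k := by
          have : k * 2 * (m + 1) = k * n + k := by rw [hn_def]; ring
          simpa [this] using hdvd.mul_right (m + 1)
        have : n ∣ k := (Nat.dvd_add_right (Dvd.intro_left k rfl)).mp hdvd2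
        have := Nat.le_of_dvd (by omega) this
        omega
      · exact h0
    · intro k hk
      have hk' := mem_Ico.1 hk
      show k * (m + 1) % n * 2 % n = k
      rw [Nat.mod_mul_mod, show k * (m + 1) * 2 = k + k * n by rw [hn_def]; ring,
        Nat.add_mul_mod_self_right, Nat.mod_eq_of_lt hk'.2]
    · intro k hk
      have hk' := mem_Ico.1 hk
      show k * 2 % n * (m + 1) % n = k
      rw [Nat.mod_mul_mod, show k * 2 * (m + 1) = k + k * n by rw [hn_def]; ring,
        Nat.add_mul_mod_self_right, Nat.mod_eq_of_lt hk'.2]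
    · intro k _
      rw [hpow hζ]
  -- pointwise identity
  have hmain : ∀ k ∈ Ico 1 n, ζ ^ k * (ζ ^ k - 1) * fz m (ζ ^ k)
      = -1 * ((ζ ^ k + 1) * (ζ ^ (k * (m + 1)) - 1)) := by
    intro k _
    have hz : (ζ ^ k) ^ n = 1 := by rw [← pow_mul, mul_comm, pow_mul, hζ.pow_eq_one, one_pow]
    have h := key hm hz
    rw [← pow_mul] at h
    rw [h]; ring
  have hprod := Finset.prod_congr rfl hmain
  have hL : ∏ k ∈ Ico 1 n, (ζ ^ k * (ζ ^ k - 1) * fz m (ζ ^ k))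
      = (n : ℂ) * ∏ k ∈ Ico 1 n, fz m (ζ ^ k) := by
    rw [Finset.prod_mul_distrib, Finset.prod_mul_distrib, hC, hA]; ring
  have hR : ∏ k ∈ Ico 1 n, (-1 * ((ζ ^ k + 1) * (ζ ^ (k * (m + 1)) - 1))) = (n : ℂ) := by
    rw [Finset.prod_mul_distrib, Finset.prod_mul_distrib, Finset.prod_const, hsign, hB, hD, hA]
    ring
  rw [hL, hR] at hprod
  have hP : ∏ k ∈ Ico 1 n, fz m (ζ ^ k) = 1 := by
    have hn0 : (n : ℂ) ≠ 0 := Nat.cast_ne_zero.2 hn.ne'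
    refine mul_left_cancel₀ hn0 ?_
    rw [mul_one]; exact hprod
  rw [range_eq_Ico, Finset.prod_eq_prod_Ico_succ_bot hn, hP, pow_zero, fz_one hm, mul_one]


theorem det_circulant_eq (n : ℕ) [NeZero n] (hζ : IsPrimitiveRoot ζ n) (c : ℕ → ℂ) :
    (Matrix.circulant fun k : ZMod n => c k.val).det
      = ∏ k ∈ range n, ∑ t ∈ range n, c t * (ζ ^ k) ^ t := by
  classical
  have hn : 0 < n := NeZero.pos n
  set χ : ZMod n → ℂ := fun j => ζ ^ j.val with hχ
  have hχadd : ∀ a b : ZMod n, χ (a + b) = χ a * χ b := by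
    intro a b
    show ζ ^ (a + b).val = ζ ^ a.val * ζ ^ b.val
    rw [ZMod.val_add, hpow hζ, pow_add]
  have hχmul : ∀ a b : ZMod n, χ (a * b) = χ b ^ a.val := by
    intro a b
    show ζ ^ (a * b).val = (ζ ^ b.val) ^ a.val
    rw [ZMod.val_mul, hpow hζ, ← pow_mul, mul_comm]
  set W : Matrix (ZMod n) (ZMod n) ℂ := Matrix.of fun i j => χ (i * j) with hW
  set D : ZMod n → ℂ := fun k => ∑ t ∈ range n, c t * χ (-k) ^ t with hD
  have hMW : (Matrix.circulant fun k : ZMod n => c k.val) * W = W * Matrix.diagonal D := by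
    ext i k
    rw [Matrix.mul_diagonal, Matrix.mul_apply]
    simp only [Matrix.circulant_apply, hW, Matrix.of_apply]
    rw [← Equiv.sum_comp (Equiv.subLeft i) (fun j => c (i - j).val * χ (j * k))]
    have hterm : ∀ t : ZMod n, c (i - Equiv.subLeft i t).val * χ (Equiv.subLeft i t * k)
        = χ (i * k) * (c t.val * χ (-k) ^ t.val) := by
      intro t
      have h1 : i - Equiv.subLeft i t = t := by simp [Equiv.subLeft]
      have h2 : Equiv.subLeft i t * k = i * k + t * (-k) := by
        simp only [Equiv.subLeft_apply]; ring
      rw [h1, h2, hχadd, hχmul t (-k)]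
      ring
    rw [Finset.sum_congr rfl fun t _ => hterm t, ← Finset.mul_sum]
    congr 1
    refine Finset.sum_nbij' (fun t : ZMod n => t.val) (fun a : ℕ => (a : ZMod n))
      ?_ ?_ ?_ ?_ ?_
    · intro a _; exact mem_range.2 a.val_lt
    · intro a _; exact mem_univ _
    · intro a _; exact ZMod.natCast_rightInverse a
    · intro a ha; exact ZMod.val_cast_of_lt (mem_range.1 ha)
    · intro a _; rfl
  -- determinant
  have hdet := congrArg Matrix.det hMW
  rw [Matrix.det_mul, Matrix.det_mul, Matrix.det_diagonal] at hdet
  -- W is invertible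
  let e : Fin n ≃ ZMod n :=
    { toFun := fun i => (i : ℕ) , invFun := fun k => ⟨k.val, k.val_lt⟩,
      left_inv := fun i => by
        ext; exact ZMod.val_cast_of_lt i.2
      right_inv := fun k => by
        simp [ZMod.natCast_rightInverse k] }
  have he : ∀ i : Fin n, e i = ((i : ℕ) : ZMod n) := fun _ => rfl
  have hsub : W.submatrix e e = Matrix.vandermonde (fun i : Fin n => ζ ^ (i : ℕ)) := by
    ext i j
    rw [Matrix.submatrix_apply, Matrix.vandermonde_apply, he, he]
    simp only [hW, Matrix.of_apply, hχ]
    rw [← Nat.cast_mul, ZMod.val_natCast, hpow hζ, pow_mul]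
  have hWdet : W.det ≠ 0 := by
    rw [← Matrix.det_submatrix_equiv_self e, hsub]
    rw [Matrix.det_vandermonde_ne_zero_iff]
    intro i j hij
    exact Fin.ext (hζ.pow_inj i.2 j.2 hij)
  have hcirc : (Matrix.circulant fun k : ZMod n => c k.val).det = ∏ k : ZMod n, D k := by
    have h := hdet
    rw [mul_comm] at h
    exact mul_left_cancel₀ hWdet h
  rw [hcirc]
  -- reindex the product
  have hneg : ∏ k : ZMod n, D k = ∏ k : ZMod n, ∑ t ∈ range n, c t * χ k ^ t :=
    Fintype.prod_equiv (Equiv.neg (ZMod n)) _ _ (fun k => rfl)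
  rw [hneg]
  refine Finset.prod_nbij' (fun k : ZMod n => k.val) (fun a : ℕ => (a : ZMod n))
    ?_ ?_ ?_ ?_ ?_
  · intro a _; exact mem_range.2 a.val_lt
  · intro a _; exact mem_univ _
  · intro a _; exact ZMod.natCast_rightInverse a
  · intro a ha; exact ZMod.val_cast_of_lt (mem_range.1 ha)
  · intro a _; rfl


end CircAux

/-- for odd `n ≥ 3`, the determinant of the `n × n` circulant integer
matrix with entries `c_0 = ⋯ = c_{(n-3)/2} = -1`, `c_{(n-1)/2} = 0`,
`c_{(n+1)/2} = ⋯ = c_{n-2} = 1` and `c_{n-1} = 0` equals `-1`.  The `(i, j)` entry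
of the circulant matrix is `c (i - j)` with indices in `ZMod n`. -/
theorem circulant_det_mixed (n : ℕ) (hn : 3 ≤ n) (hodd : Odd n) [NeZero n] :
    (Matrix.circulant fun k : ZMod n =>
        if k.val < (n - 1) / 2 then (-1 : ℤ)
        else if (n + 1) / 2 ≤ k.val ∧ k.val ≤ n - 2 then 1 else 0).det = -1 := by
  obtain ⟨m, rfl⟩ := hodd
  have hm : 1 ≤ m := by omega
  have hfun : (fun k : ZMod (2 * m + 1) =>
      if k.val < (2 * m + 1 - 1) / 2 then (-1 : ℤ)
      else if (2 * m + 1 + 1) / 2 ≤ k.val ∧ k.val ≤ 2 * m + 1 - 2 then 1 else 0)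
      = fun k : ZMod (2 * m + 1) =>
        (if k.val < m then (-1 : ℤ) else if m + 1 ≤ k.val ∧ k.val ≤ 2 * m - 1 then 1 else 0) := by
    funext k
    rw [show (2 * m + 1 - 1) / 2 = m by omega, show (2 * m + 1 + 1) / 2 = m + 1 by omega,
      show 2 * m + 1 - 2 = 2 * m - 1 by omega]
  rw [hfun]
  set M := Matrix.circulant fun k : ZMod (2 * m + 1) =>
    (if k.val < m then (-1 : ℤ) else if m + 1 ≤ k.val ∧ k.val ≤ 2 * m - 1 then 1 else 0) with hM
  have hζ := Complex.isPrimitiveRoot_exp (2 * m + 1) (by omega)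
  have hmap : M.map (Int.cast : ℤ → ℂ)
      = Matrix.circulant fun k : ZMod (2 * m + 1) => CircAux.cc m k.val := by
    ext i j
    simp only [hM, Matrix.map_apply, Matrix.circulant_apply, CircAux.cc]
    split_ifs <;> simp
  have hdetC : (M.map (Int.cast : ℤ → ℂ)).det = -1 := by
    rw [hmap, CircAux.det_circulant_eq _ hζ (CircAux.cc m)]
    exact CircAux.prod_f hm hζ
  have h2 : ((M.det : ℤ) : ℂ) = -1 := by
    rw [show ((M.det : ℤ) : ℂ) = (M.map (Int.cast : ℤ → ℂ)).det from
      RingHom.map_det (Int.castRingHom ℂ) M, hdetC]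
  exact_mod_cast h2
end

section
/- Let G be a finite group, F a free group of finite rank d, ε : F → G a surjective group homomorphism, and R = ker ε. Then there is a short exact sequence of ℤ[G]-modules 0 → R^{ab} → ℤ[G]^{(d)} → I_G → 0; that is, there exist an injective ℤ[G]-module homomorphism ι : R^{ab} → ℤ[G]^{(d)} and a surjective ℤ[G]-module homomorphism π : ℤ[G]^{(d)} → I_G with ker π = image ι, where ℤ[G]^{(d)} denotes the direct sum of d copies of ℤ[G]. -/
noncomputable section AffSection

variable {H : Type} [Group H] {d : ℕ}

/-- The "affine group" `H ⋉ ℤ[H]^d` used to define Fox-derivative crossed homomorphisms. -/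
@[ext] structure AffGrp (H : Type) [Group H] (d : ℕ) where
  g : H
  v : Fin d → MonoidAlgebra ℤ H

namespace AffGrp

instance : One (AffGrp H d) := ⟨⟨1, 0⟩⟩
instance : Mul (AffGrp H d) := ⟨fun a b => ⟨a.g * b.g, a.v + MonoidAlgebra.of ℤ H a.g • b.v⟩⟩
instance : Inv (AffGrp H d) := ⟨fun a => ⟨a.g⁻¹, -(MonoidAlgebra.of ℤ H a.g⁻¹ • a.v)⟩⟩

@[simp] lemma one_g : (1 : AffGrp H d).g = 1 := rfl
@[simp] lemma one_v : (1 : AffGrp H d).v = 0 := rfl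
@[simp] lemma mul_g (a b : AffGrp H d) : (a * b).g = a.g * b.g := rfl
@[simp] lemma mul_v (a b : AffGrp H d) :
    (a * b).v = a.v + MonoidAlgebra.of ℤ H a.g • b.v := rfl
@[simp] lemma inv_g (a : AffGrp H d) : (a⁻¹).g = a.g⁻¹ := rfl
@[simp] lemma inv_v (a : AffGrp H d) : (a⁻¹).v = -(MonoidAlgebra.of ℤ H a.g⁻¹ • a.v) := rfl

instance : Group (AffGrp H d) where
  mul_assoc a b c := by
    ext : 1
    · exact mul_assoc _ _ _
    · simp only [mul_v, mul_g, smul_add, smul_smul, ← map_mul, add_assoc]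
  one_mul a := by ext : 1 <;> simp [← MonoidAlgebra.one_def]
  mul_one a := by ext : 1 <;> simp
  inv_mul_cancel a := by
    ext : 1
    · simp
    · show -(MonoidAlgebra.of ℤ H a.g⁻¹ • a.v) + MonoidAlgebra.of ℤ H a.g⁻¹ • a.v = 0
      simp

end AffGrp

variable (η : FreeGroup (Fin d) →* H)

/-- The crossed homomorphism packaged as a group homomorphism into `AffGrp`. -/
def foxHom : FreeGroup (Fin d) →* AffGrp H d :=
  FreeGroup.lift fun i => ⟨η (FreeGroup.of i), Pi.single i 1⟩

/-- The Fox derivative (pushed forward along `η`). -/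
def foxD (w : FreeGroup (Fin d)) : Fin d → MonoidAlgebra ℤ H := (foxHom η w).v

lemma foxHom_g (w : FreeGroup (Fin d)) : (foxHom η w).g = η w := by
  have : (MonoidHom.mk' (fun a : AffGrp H d => a.g) (fun a b => rfl)).comp (foxHom η) = η := by
    apply FreeGroup.ext_hom
    intro i
    simp [foxHom]
  exact DFunLike.congr_fun this w

@[simp] lemma foxD_of (i : Fin d) : foxD η (FreeGroup.of i) = Pi.single i 1 := by
  show (foxHom η (FreeGroup.of i)).v = _
  simp [foxHom]

lemma foxD_mul (u v : FreeGroup (Fin d)) :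
    foxD η (u * v) = foxD η u + MonoidAlgebra.of ℤ H (η u) • foxD η v := by
  show (foxHom η (u * v)).v = _
  rw [map_mul, AffGrp.mul_v, foxHom_g]
  rfl

@[simp] lemma foxD_one : foxD η 1 = 0 := by
  show (foxHom η 1).v = _
  rw [map_one]
  rfl

lemma foxD_inv (u : FreeGroup (Fin d)) :
    foxD η u⁻¹ = -(MonoidAlgebra.of ℤ H (η u⁻¹) • foxD η u) := by
  have h := foxD_mul η u u⁻¹
  rw [mul_inv_cancel, foxD_one] at h
  have := congrArg (fun x => MonoidAlgebra.of ℤ H (η u⁻¹) • x) h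
  simp only [smul_zero, smul_add, smul_smul, ← map_mul, inv_mul_cancel, map_one, one_smul] at this
  rw [add_comm] at this
  exact (neg_eq_of_add_eq_zero_left this.symm).symm

/-- The map `ℤ[H]^d → ℤ[H]`, `v ↦ ∑ vᵢ (η(xᵢ) - 1)`. -/
def qmap : (Fin d → MonoidAlgebra ℤ H) →ₗ[MonoidAlgebra ℤ H] MonoidAlgebra ℤ H where
  toFun v := ∑ i, v i * (MonoidAlgebra.of ℤ H (η (FreeGroup.of i)) - 1)
  map_add' u v := by simp [add_mul, Finset.sum_add_distrib]
  map_smul' a v := by simp [Finset.mul_sum, mul_assoc]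

lemma qmap_apply (v : Fin d → MonoidAlgebra ℤ H) :
    qmap η v = ∑ i, v i * (MonoidAlgebra.of ℤ H (η (FreeGroup.of i)) - 1) := rfl

lemma qmap_single (i : Fin d) (a : MonoidAlgebra ℤ H) :
    qmap η (Pi.single i a) = a * (MonoidAlgebra.of ℤ H (η (FreeGroup.of i)) - 1) := by
  rw [qmap_apply]
  rw [Finset.sum_eq_single i]
  · simp
  · intro j _ hj
    simp [Pi.single_apply, hj]
  · simp

/-- The fundamental identity of Fox calculus. -/
lemma qmap_foxD (w : FreeGroup (Fin d)) :
    qmap η (foxD η w) = MonoidAlgebra.of ℤ H (η w) - 1 := by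
  induction w using FreeGroup.induction_on with
  | C1 => simp [← MonoidAlgebra.one_def]
  | of i =>
      show qmap η (foxD η (FreeGroup.of i)) = MonoidAlgebra.of ℤ H (η (FreeGroup.of i)) - 1
      rw [foxD_of, qmap_single]; simp
  | inv_of i ih =>
      rw [foxD_inv, map_neg, map_smul, ih, smul_eq_mul, mul_sub, mul_one, ← map_mul,
        ← map_mul η, inv_mul_cancel, map_one, map_one, neg_sub]
  | mul u v hu hv =>
      rw [foxD_mul, map_add, map_smul, hu, hv, smul_eq_mul, mul_sub, mul_one, ← map_mul,
        map_mul η]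
      abel

lemma foxD_conj (f r : FreeGroup (Fin d)) (hr : η r = 1) :
    foxD η (f * r * f⁻¹) = MonoidAlgebra.of ℤ H (η f) • foxD η r := by
  have hff : foxD η f + MonoidAlgebra.of ℤ H (η f) • foxD η f⁻¹ = 0 := by
    rw [← foxD_mul, mul_inv_cancel, foxD_one]
  rw [mul_assoc, foxD_mul, foxD_mul, hr, map_one, one_smul, smul_add, ← add_assoc,
    add_comm (foxD η f) _, add_assoc, hff, add_zero]

/-- Fox derivative in coordinate `i`, as a `ℤ`-linear map on the group ring of the free group. -/
def fdelta (d : ℕ) (i : Fin d) :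
    MonoidAlgebra ℤ (FreeGroup (Fin d)) →ₗ[ℤ] MonoidAlgebra ℤ (FreeGroup (Fin d)) :=
  Finsupp.linearCombination ℤ (fun w => foxD (MonoidHom.id (FreeGroup (Fin d))) w i)
    ∘ₗ (MonoidAlgebra.coeffLinearEquiv ℤ).toLinearMap

lemma fdelta_single (d : ℕ) (i : Fin d) (w : FreeGroup (Fin d)) (c : ℤ) :
    fdelta d i (MonoidAlgebra.single w c) = c • foxD (MonoidHom.id (FreeGroup (Fin d))) w i := by
  show Finsupp.linearCombination ℤ (fun w => foxD (MonoidHom.id (FreeGroup (Fin d))) w i)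
    (Finsupp.single w c) = _
  exact Finsupp.linearCombination_single ℤ c w

lemma fdelta_mul_of (d : ℕ) (i j : Fin d) (a : MonoidAlgebra ℤ (FreeGroup (Fin d))) :
    fdelta d i (a * (MonoidAlgebra.of ℤ (FreeGroup (Fin d)) (FreeGroup.of j) - 1)) =
      if i = j then a else 0 := by
  induction a using MonoidAlgebra.induction_linear with
  | zero => rw [zero_mul, map_zero]; simp
  | add f g hf hg => rw [add_mul, map_add, hf, hg]; split <;> simp
  | single w c =>
      rw [mul_sub, mul_one, MonoidAlgebra.of_apply, MonoidAlgebra.single_mul_single,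
        map_sub, fdelta_single, fdelta_single, foxD_mul]
      simp only [MonoidHom.id_apply, Pi.add_apply, Pi.smul_apply, foxD_of, Pi.single_apply,
        smul_add, mul_one]
      split
      · next h =>
          subst h
          simp [MonoidAlgebra.smul_single', MonoidAlgebra.of_apply]
      · next h =>
          simp [Ne.symm h]

lemma mapDomainRingHom_of {H : Type} [Group H] {d : ℕ} (η : FreeGroup (Fin d) →* H)
    (w : FreeGroup (Fin d)) :
    MonoidAlgebra.mapDomainRingHom ℤ η (MonoidAlgebra.of ℤ (FreeGroup (Fin d)) w)
      = MonoidAlgebra.of ℤ H (η w) := by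
  simp [MonoidAlgebra.mapDomainRingHom, MonoidAlgebra.of_apply, Finsupp.mapDomain_single]

lemma mapDomainRingHom_foxD {H : Type} [Group H] {d : ℕ} (η : FreeGroup (Fin d) →* H)
    (w : FreeGroup (Fin d)) (i : Fin d) :
    MonoidAlgebra.mapDomainRingHom ℤ η (foxD (MonoidHom.id (FreeGroup (Fin d))) w i)
      = foxD η w i := by
  induction w using FreeGroup.induction_on generalizing i with
  | C1 => simp
  | of j =>
      show MonoidAlgebra.mapDomainRingHom ℤ η
        (foxD (MonoidHom.id (FreeGroup (Fin d))) (FreeGroup.of j) i) = foxD η (FreeGroup.of j) i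
      rw [foxD_of, foxD_of, Pi.single_apply, Pi.single_apply]
      split <;> simp
  | inv_of j ih =>
      show MonoidAlgebra.mapDomainRingHom ℤ η
        (foxD (MonoidHom.id (FreeGroup (Fin d))) (FreeGroup.of j)⁻¹ i)
        = foxD η (FreeGroup.of j)⁻¹ i
      rw [foxD_inv, foxD_inv]
      simp only [Pi.neg_apply, Pi.smul_apply, smul_eq_mul, map_neg, map_mul,
        mapDomainRingHom_of, MonoidHom.id_apply]
      exact congrArg (fun x => -(MonoidAlgebra.of ℤ H (η (FreeGroup.of j)⁻¹) * x)) (ih i)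
  | mul u v hu hv =>
      rw [foxD_mul, foxD_mul]
      simp only [Pi.add_apply, Pi.smul_apply, smul_eq_mul, map_add, map_mul,
        mapDomainRingHom_of, MonoidHom.id_apply]
      rw [hu, hv]

end AffSection

section Main

variable {G : Type} [Group G] {d : ℕ}

open MonoidAlgebra in
/-- Generators `w (r - 1)` of the relation ideal `ker εstar`. -/
noncomputable def relSpan (ε : FreeGroup (Fin d) →* G) : Submodule ℤ (MonoidAlgebra ℤ (FreeGroup (Fin d))) :=
  Submodule.span ℤ {x | ∃ w r, ∃ _ : r ∈ ε.ker,
    x = single w 1 * (single r (1:ℤ) - 1)}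

lemma estar_eq (ε : FreeGroup (Fin d) →* G) (x : MonoidAlgebra ℤ (FreeGroup (Fin d))) :
    MonoidAlgebra.mapDomainRingHom ℤ ε x = MonoidAlgebra.mapDomain ε x := rfl

lemma ker_estar_le_relSpan (ε : FreeGroup (Fin d) →* G) (hε : Function.Surjective ε)
    (x : MonoidAlgebra ℤ (FreeGroup (Fin d)))
    (hx : MonoidAlgebra.mapDomainRingHom ℤ ε x = 0) : x ∈ relSpan ε := by
  classical
  set t : G → FreeGroup (Fin d) := Function.surjInv hε with ht_def
  have ht : ∀ g, ε (t g) = g := fun g => Function.surjInv_eq hε g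
  set m : MonoidAlgebra ℤ (FreeGroup (Fin d)) := MonoidAlgebra.mapDomain (fun w => t (ε w)) x with hm
  have hmap : m = 0 := by
    have h1 : (fun w => t (ε w)) = t ∘ ε := rfl
    have h2 : (MonoidAlgebra.mapDomainRingHom ℤ ε x).coeff = Finsupp.mapDomain ε x.coeff := rfl
    rw [hx] at h2
    apply MonoidAlgebra.coeff_injective
    show Finsupp.mapDomain (fun w => t (ε w)) x.coeff
      = (0 : MonoidAlgebra ℤ (FreeGroup (Fin d))).coeff
    rw [h1, Finsupp.mapDomain_comp, ← h2, MonoidAlgebra.coeff_zero, Finsupp.mapDomain_zero]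
    rfl
  have hxeq : x = x - m := by rw [hmap, sub_zero]
  rw [hxeq]
  have hsum : x - m
      = x.coeff.sum (fun w c => MonoidAlgebra.single w c - MonoidAlgebra.single (t (ε w)) c) := by
    rw [Finsupp.sum_sub]
    exact congrArg₂ (· - ·) (MonoidAlgebra.sum_coeff_single x).symm
      (MonoidAlgebra.ofCoeff_finsuppSum x.coeff (fun w c => Finsupp.single (t (ε w)) c))
  rw [hsum, Finsupp.sum]
  apply Submodule.sum_mem
  intro w _
  have hgen : (MonoidAlgebra.single w (x.coeff w) - MonoidAlgebra.single (t (ε w)) (x.coeff w)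
      : MonoidAlgebra ℤ (FreeGroup (Fin d)))
      = (x.coeff w) • (MonoidAlgebra.single w 1 - MonoidAlgebra.single (t (ε w)) 1) := by
    rw [smul_sub, MonoidAlgebra.smul_single, MonoidAlgebra.smul_single, smul_eq_mul, mul_one]
  rw [hgen]
  refine Submodule.smul_mem _ _ (Submodule.subset_span ?_)
  refine ⟨t (ε w), (t (ε w))⁻¹ * w, ?_, ?_⟩
  · have : ε ((t (ε w))⁻¹ * w) = 1 := by rw [map_mul, map_inv, ht, inv_mul_cancel]
    exact this
  · rw [mul_sub, mul_one, MonoidAlgebra.single_mul_single, mul_one, mul_inv_cancel_left]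

variable (ε : FreeGroup (Fin d) →* G) (hε : Function.Surjective ε)
  (M : Type) [AddCommGroup M] [Module (MonoidAlgebra ℤ G) M] (π : ε.ker → M)

lemma kerMemAux (w : FreeGroup (Fin d)) : w * (Function.surjInv hε (ε w))⁻¹ ∈ ε.ker := by
  have : ε (w * (Function.surjInv hε (ε w))⁻¹) = 1 := by
    rw [map_mul, map_inv, Function.surjInv_eq hε, mul_inv_cancel]
  exact this

/-- The retraction `ℤ[F] → M`, `w ↦ π (w · t(ε w)⁻¹)`. -/
noncomputable def Psi : MonoidAlgebra ℤ (FreeGroup (Fin d)) →ₗ[ℤ] M :=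
  Finsupp.linearCombination ℤ
    (fun w => π ⟨w * (Function.surjInv hε (ε w))⁻¹, kerMemAux ε hε w⟩)
    ∘ₗ (MonoidAlgebra.coeffLinearEquiv ℤ).toLinearMap

omit [Module (MonoidAlgebra ℤ G) M] in
lemma Psi_single (w : FreeGroup (Fin d)) (c : ℤ) :
    Psi ε hε M π (MonoidAlgebra.single w c)
      = c • π ⟨w * (Function.surjInv hε (ε w))⁻¹, kerMemAux ε hε w⟩ := by
  show Finsupp.linearCombination ℤ
    (fun w => π ⟨w * (Function.surjInv hε (ε w))⁻¹, kerMemAux ε hε w⟩) (Finsupp.single w c) = _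
  exact Finsupp.linearCombination_single ℤ c w

variable (hπadd : ∀ r s : ε.ker, π (r * s) = π r + π s)
  (hπconj : ∀ (f : FreeGroup (Fin d)) (r s : ε.ker),
      (s : FreeGroup (Fin d)) = f * r * f⁻¹ →
      π s = MonoidAlgebra.of ℤ G (ε f) • π r)

include hπadd hπconj in
lemma Psi_mul_sub (w r : FreeGroup (Fin d)) (hr : r ∈ ε.ker) :
    Psi ε hε M π (MonoidAlgebra.single (w * r) 1) - Psi ε hε M π (MonoidAlgebra.single w 1)
      = MonoidAlgebra.of ℤ G (ε w) • π ⟨r, hr⟩ := by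
  rw [Psi_single, Psi_single, one_smul, one_smul]
  have hεwr : ε (w * r) = ε w := by
    rw [map_mul, MonoidHom.mem_ker.mp hr, mul_one]
  have hb : w * r * w⁻¹ ∈ ε.ker := by
    have : ε (w * r * w⁻¹) = 1 := by
      rw [map_mul, map_mul, MonoidHom.mem_ker.mp hr, mul_one, map_inv, mul_inv_cancel]
    exact this
  have hsplit : (⟨w * r * (Function.surjInv hε (ε (w * r)))⁻¹, kerMemAux ε hε (w * r)⟩ : ε.ker)
      = ⟨w * r * w⁻¹, hb⟩ * ⟨w * (Function.surjInv hε (ε w))⁻¹, kerMemAux ε hε w⟩ := by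
    apply Subtype.ext
    show w * r * (Function.surjInv hε (ε (w * r)))⁻¹
      = (w * r * w⁻¹) * (w * (Function.surjInv hε (ε w))⁻¹)
    rw [hεwr]
    group
  rw [hsplit, hπadd]
  rw [hπconj w ⟨r, hr⟩ ⟨w * r * w⁻¹, hb⟩ rfl]
  abel

include hπadd hπconj in
lemma Psi_sub_one (r : FreeGroup (Fin d)) (hr : r ∈ ε.ker) :
    Psi ε hε M π (MonoidAlgebra.single r 1 - 1) = π ⟨r, hr⟩ := by
  have := Psi_mul_sub ε hε M π hπadd hπconj 1 r hr
  rw [one_mul, map_one, map_one, one_smul] at this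
  rw [MonoidAlgebra.one_def, map_sub, this]

include hπadd hπconj in
lemma Psi_kill (x : MonoidAlgebra ℤ (FreeGroup (Fin d))) (hx : x ∈ relSpan ε)
    (u : FreeGroup (Fin d)) :
    Psi ε hε M π (x * (MonoidAlgebra.single u 1 - 1)) = 0 := by
  induction hx using Submodule.span_induction with
  | mem x hx =>
      obtain ⟨w, r, hr, rfl⟩ := hx
      have e1 : MonoidAlgebra.single w (1:ℤ) * (MonoidAlgebra.single r 1 - 1)
          = MonoidAlgebra.single (w * r) 1 - MonoidAlgebra.single w 1 := by
        rw [mul_sub, mul_one, MonoidAlgebra.single_mul_single, mul_one]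
      have hmem : u⁻¹ * r * u ∈ ε.ker := by
        have : ε (u⁻¹ * r * u) = 1 := by
          rw [map_mul, map_mul, MonoidHom.mem_ker.mp hr, mul_one, map_inv, inv_mul_cancel]
        exact this
      have hexp : (MonoidAlgebra.single w (1:ℤ) * (MonoidAlgebra.single r 1 - 1))
          * (MonoidAlgebra.single u 1 - 1)
          = (MonoidAlgebra.single ((w * u) * (u⁻¹ * r * u)) (1:ℤ)
              - MonoidAlgebra.single (w * u) 1)
            - (MonoidAlgebra.single (w * r) 1 - MonoidAlgebra.single w 1) := by
        have huru : (w * u) * (u⁻¹ * r * u) = w * r * u := by group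
        rw [e1, huru]
        simp only [sub_mul, mul_sub, mul_one, MonoidAlgebra.single_mul_single]
        try abel
      rw [hexp, map_sub,
        show Psi ε hε M π (MonoidAlgebra.single (w * u * (u⁻¹ * r * u)) 1
              - MonoidAlgebra.single (w * u) 1)
          = MonoidAlgebra.of ℤ G (ε (w * u)) • π ⟨u⁻¹ * r * u, hmem⟩ from by
          rw [map_sub]
          exact Psi_mul_sub ε hε M π hπadd hπconj (w * u) (u⁻¹ * r * u) hmem,
        show Psi ε hε M π (MonoidAlgebra.single (w * r) 1
              - MonoidAlgebra.single w 1)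
          = MonoidAlgebra.of ℤ G (ε w) • π ⟨r, hr⟩ from by
          rw [map_sub]
          exact Psi_mul_sub ε hε M π hπadd hπconj w r hr]
      have hconj : π ⟨u⁻¹ * r * u, hmem⟩ = MonoidAlgebra.of ℤ G (ε u⁻¹) • π ⟨r, hr⟩ := by
        apply hπconj u⁻¹ ⟨r, hr⟩ ⟨u⁻¹ * r * u, hmem⟩
        show u⁻¹ * r * u = u⁻¹ * r * u⁻¹⁻¹
        rw [inv_inv]
      rw [hconj, smul_smul, ← map_mul, show ε (w * u) * ε u⁻¹ = ε w by
        rw [map_mul, map_inv, mul_inv_cancel_right]]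
      exact sub_self _
  | zero => rw [zero_mul, map_zero]
  | add x y _ _ hx hy => rw [add_mul, map_add, hx, hy, add_zero]
  | smul c x _ hx => rw [smul_mul_assoc, map_smul, hx, smul_zero]

omit [Module (MonoidAlgebra ℤ G) M] in
include hπadd in
lemma pi_one' : π 1 = 0 := by
  have h := hπadd 1 1
  rw [mul_one] at h
  exact (left_eq_add.mp h)

omit [Module (MonoidAlgebra ℤ G) M] in
include hπadd in
lemma pi_inv' (r : ε.ker) : π r⁻¹ = - π r := by
  have h := hπadd r⁻¹ r
  rw [inv_mul_cancel, pi_one' ε M π hπadd] at h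
  exact eq_neg_of_add_eq_zero_left h.symm

lemma foxD_ker_mul (r s : FreeGroup (Fin d)) (hr : r ∈ ε.ker) :
    foxD ε (r * s) = foxD ε r + foxD ε s := by
  rw [foxD_mul, MonoidHom.mem_ker.mp hr, map_one, one_smul]

lemma foxD_ker_inv (r : FreeGroup (Fin d)) (hr : r ∈ ε.ker) :
    foxD ε r⁻¹ = - foxD ε r := by
  rw [foxD_inv, map_inv, MonoidHom.mem_ker.mp hr, inv_one, map_one, one_smul]

open scoped commutatorElement in
lemma foxD_commutator_eq_zero (x : FreeGroup (Fin d))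
    (hx : x ∈ (⁅ε.ker, ε.ker⁆ : Subgroup (FreeGroup (Fin d)))) : foxD ε x = 0 := by
  rw [Subgroup.commutator_def] at hx
  have hsub : Subgroup.closure {g | ∃ g₁ ∈ ε.ker, ∃ g₂ ∈ ε.ker, ⁅g₁, g₂⁆ = g} ≤ ε.ker := by
    rw [Subgroup.closure_le]
    rintro g ⟨a, ha, b, hb, rfl⟩
    exact mul_mem (mul_mem (mul_mem ha hb) (inv_mem ha)) (inv_mem hb)
  induction hx using Subgroup.closure_induction with
  | mem g hg =>
      obtain ⟨a, ha, b, hb, rfl⟩ := hg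
      rw [commutatorElement_def,
        foxD_ker_mul ε _ _ (mul_mem (mul_mem ha hb) (inv_mem ha)),
        foxD_ker_mul ε _ _ (mul_mem ha hb),
        foxD_ker_mul ε _ _ ha,
        foxD_ker_inv ε _ ha, foxD_ker_inv ε _ hb]
      abel
  | one => exact foxD_one ε
  | mul a b ha hb iha ihb =>
      rw [foxD_ker_mul ε _ _ (hsub ha), iha, ihb, add_zero]
  | inv a ha iha =>
      rw [foxD_ker_inv ε _ (hsub ha), iha, neg_zero]

include hπadd in
lemma foxD_eq_of_pi_eq (hπker : ∀ r : ε.ker, π r = 0 ↔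
      (r : FreeGroup (Fin d)) ∈ (⁅ε.ker, ε.ker⁆ : Subgroup (FreeGroup (Fin d))))
    (r s : ε.ker) (h : π r = π s) :
    foxD ε (r : FreeGroup (Fin d)) = foxD ε (s : FreeGroup (Fin d)) := by
  have h0 : π (r * s⁻¹) = 0 := by
    rw [hπadd, pi_inv' ε M π hπadd, h, add_neg_cancel]
  have hc := (hπker _).mp h0
  have h1 : foxD ε ((r : FreeGroup (Fin d)) * (s : FreeGroup (Fin d))⁻¹) = 0 :=
    foxD_commutator_eq_zero ε _ hc
  rw [foxD_ker_mul ε _ _ r.2, foxD_ker_inv ε _ s.2] at h1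
  rw [← sub_eq_zero, sub_eq_add_neg]
  exact h1

variable (hπsurj : Function.Surjective π)
  (hπker : ∀ r : ε.ker, π r = 0 ↔
      (r : FreeGroup (Fin d)) ∈ (⁅ε.ker, ε.ker⁆ : Subgroup (FreeGroup (Fin d))))

include hπadd hπker hπsurj in
lemma iota0_pi (r : ε.ker) :
    foxD ε ((Function.surjInv hπsurj (π r) : ε.ker) : FreeGroup (Fin d))
      = foxD ε (r : FreeGroup (Fin d)) :=
  foxD_eq_of_pi_eq ε M π hπadd hπker _ r (Function.surjInv_eq hπsurj (π r))

include hπadd hπker hπsurj in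
lemma iota0_add (m n : M) :
    foxD ε ((Function.surjInv hπsurj (m + n) : ε.ker) : FreeGroup (Fin d))
      = foxD ε ((Function.surjInv hπsurj m : ε.ker) : FreeGroup (Fin d))
        + foxD ε ((Function.surjInv hπsurj n : ε.ker) : FreeGroup (Fin d)) := by
  have hab : π (Function.surjInv hπsurj m * Function.surjInv hπsurj n) = m + n := by
    rw [hπadd, Function.surjInv_eq hπsurj, Function.surjInv_eq hπsurj]
  have h1 : foxD ε ((Function.surjInv hπsurj (m + n) : ε.ker) : FreeGroup (Fin d))
      = foxD ε ((Function.surjInv hπsurj m * Function.surjInv hπsurj n : ε.ker)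
          : FreeGroup (Fin d)) := by
    apply foxD_eq_of_pi_eq ε M π hπadd hπker
    rw [Function.surjInv_eq hπsurj, hab]
  rw [h1]
  show foxD ε (((Function.surjInv hπsurj m : ε.ker) : FreeGroup (Fin d))
    * ((Function.surjInv hπsurj n : ε.ker) : FreeGroup (Fin d))) = _
  rw [foxD_ker_mul ε _ _ (Function.surjInv hπsurj m).2]

include hε hπadd hπconj hπker hπsurj in
lemma iota0_smul (x : MonoidAlgebra ℤ G) (m : M) :
    foxD ε ((Function.surjInv hπsurj (x • m) : ε.ker) : FreeGroup (Fin d))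
      = x • foxD ε ((Function.surjInv hπsurj m : ε.ker) : FreeGroup (Fin d)) := by
  let J : M →+ (Fin d → MonoidAlgebra ℤ G) :=
    AddMonoidHom.mk' (fun m => foxD ε ((Function.surjInv hπsurj m : ε.ker) : FreeGroup (Fin d)))
      (iota0_add ε M π hπadd hπsurj hπker)
  have hJ : ∀ m, J m
      = foxD ε ((Function.surjInv hπsurj m : ε.ker) : FreeGroup (Fin d)) := fun _ => rfl
  rw [← hJ, ← hJ]
  induction x using MonoidAlgebra.induction_on generalizing m with
  | of g =>
      obtain ⟨f, hf⟩ := hε g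
      have hmem : f * ((Function.surjInv hπsurj m : ε.ker) : FreeGroup (Fin d)) * f⁻¹
          ∈ ε.ker := by
        have : ε (f * ((Function.surjInv hπsurj m : ε.ker) : FreeGroup (Fin d)) * f⁻¹) = 1 := by
          rw [map_mul, map_mul, MonoidHom.mem_ker.mp (Function.surjInv hπsurj m).2, mul_one,
            map_inv, mul_inv_cancel]
        exact this
      have hπs : π ⟨_, hmem⟩ = MonoidAlgebra.of ℤ G g • m := by
        rw [hπconj f (Function.surjInv hπsurj m) ⟨_, hmem⟩ rfl, hf,
          Function.surjInv_eq hπsurj]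
      have h1 : J (MonoidAlgebra.of ℤ G g • m)
          = foxD ε ((⟨_, hmem⟩ : ε.ker) : FreeGroup (Fin d)) := by
        rw [hJ]
        apply foxD_eq_of_pi_eq ε M π hπadd hπker
        rw [Function.surjInv_eq hπsurj, hπs]
      rw [h1, hJ, ← hf]
      exact foxD_conj ε f _ (MonoidHom.mem_ker.mp (Function.surjInv hπsurj m).2)
  | add x y hx hy =>
      rw [add_smul, map_add J, hx, hy, add_smul]
  | smul c x hx =>
      rw [smul_assoc, map_zsmul J, hx, smul_assoc]

/-- The embedding `M → ℤ[G]^d` as a `ℤ[G]`-linear map. -/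
noncomputable def iotaL : M →ₗ[MonoidAlgebra ℤ G] (Fin d → MonoidAlgebra ℤ G) where
  toFun m := foxD ε ((Function.surjInv hπsurj m : ε.ker) : FreeGroup (Fin d))
  map_add' m n := iota0_add ε M π hπadd hπsurj hπker m n
  map_smul' x m := iota0_smul ε hε M π hπadd hπconj hπsurj hπker x m

end Main

/-- The augmentation ideal `I_G`: the kernel of the ring homomorphism
`ℤ[G] → ℤ` sending every group element to `1`. -/
noncomputable def augIdeal (G : Type) [Group G] : Ideal (MonoidAlgebra ℤ G) :=
  RingHom.ker ((MonoidAlgebra.lift ℤ ℤ G) 1).toRingHom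

/-- for a free presentation `1 → R → F → G → 1` of a finite group `G`
(`F` free of rank `d`, `ε` surjective, `R = ker ε`) there is a short exact sequence
of `ℤ[G]`-modules `0 → R^{ab} → ℤ[G]^{(d)} → I_G → 0`.

The relation module `R^{ab}` is characterised as a `ℤ[G]`-module `M` together with
a surjective map `π : R → M` satisfying `π(rs) = π(r) + π(s)`, with kernel exactly
the commutator subgroup `[R, R]`, and compatible with conjugation:
`π(f r f⁻¹) = ε(f) • π(r)`. -/
theorem relationModule_ses (G : Type) [Group G] [Finite G] (d : ℕ)
    (ε : FreeGroup (Fin d) →* G) (hε : Function.Surjective ε)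
    (M : Type) [AddCommGroup M] [Module (MonoidAlgebra ℤ G) M]
    (π : ε.ker → M)
    (hπadd : ∀ r s : ε.ker, π (r * s) = π r + π s)
    (hπsurj : Function.Surjective π)
    (hπker : ∀ r : ε.ker, π r = 0 ↔
      (r : FreeGroup (Fin d)) ∈ (⁅ε.ker, ε.ker⁆ : Subgroup (FreeGroup (Fin d))))
    (hπconj : ∀ (f : FreeGroup (Fin d)) (r s : ε.ker),
      (s : FreeGroup (Fin d)) = f * r * f⁻¹ →
      π s = MonoidAlgebra.of ℤ G (ε f) • π r) :
    ∃ (ι : M →ₗ[MonoidAlgebra ℤ G] (Fin d → MonoidAlgebra ℤ G))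
      (p : (Fin d → MonoidAlgebra ℤ G) →ₗ[MonoidAlgebra ℤ G] ↥(augIdeal G)),
      Function.Injective ι ∧ Function.Surjective p ∧
      LinearMap.ker p = LinearMap.range ι := by
  classical
  set aug : MonoidAlgebra ℤ G →+* ℤ := ((MonoidAlgebra.lift ℤ ℤ G) (1 : G →* ℤ)).toRingHom
    with haugdef
  have hmem : ∀ x : MonoidAlgebra ℤ G, x ∈ augIdeal G ↔ aug x = 0 := fun x => Iff.rfl
  have haug : ∀ g : G, aug (MonoidAlgebra.of ℤ G g) = 1 := by
    intro g
    rw [haugdef]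
    simp [MonoidAlgebra.lift_of]
  have hq : ∀ v : Fin d → MonoidAlgebra ℤ G, qmap ε v ∈ augIdeal G := by
    intro v
    rw [hmem, qmap_apply, map_sum]
    apply Finset.sum_eq_zero
    intro i _
    rw [map_mul, map_sub, map_one, haug, sub_self, mul_zero]
  set ι := iotaL ε hε M π hπadd hπconj hπsurj hπker with hι
  set p := LinearMap.codRestrict (augIdeal G) (qmap ε) hq with hp
  have hιapp : ∀ m : M, ι m
      = foxD ε ((Function.surjInv hπsurj m : ε.ker) : FreeGroup (Fin d)) := fun _ => rfl
  have hιπ : ∀ r : ε.ker, ι (π r) = foxD ε (r : FreeGroup (Fin d)) := by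
    intro r
    rw [hιapp]
    exact iota0_pi ε M π hπadd hπsurj hπker r
  have hpapp : ∀ v, (p v : MonoidAlgebra ℤ G) = qmap ε v := fun _ => rfl
  refine ⟨ι, p, ?_, ?_, ?_⟩
  · -- injectivity
    have key : ∀ m : M, ι m = 0 → m = 0 := by
      intro m h0
      have hDr : foxD ε ((Function.surjInv hπsurj m : ε.ker) : FreeGroup (Fin d)) = 0 := by
        rw [← hιapp, h0]
      set r : ε.ker := Function.surjInv hπsurj m with hrdef
      have hrel : ∀ i, foxD (MonoidHom.id (FreeGroup (Fin d))) (r : FreeGroup (Fin d)) i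
          ∈ relSpan ε := by
        intro i
        apply ker_estar_le_relSpan ε hε
        rw [mapDomainRingHom_foxD ε _ i]
        exact congrFun hDr i
      have hfund := qmap_foxD (MonoidHom.id (FreeGroup (Fin d))) (r : FreeGroup (Fin d))
      have hπr : π r = 0 := by
        have h1 : π r = Psi ε hε M π
            (MonoidAlgebra.single ((r : ε.ker) : FreeGroup (Fin d)) 1 - 1) :=
          (Psi_sub_one ε hε M π hπadd hπconj _ r.2).symm
        rw [h1, show (MonoidAlgebra.single ((r : ε.ker) : FreeGroup (Fin d)) (1:ℤ))
            = MonoidAlgebra.of ℤ (FreeGroup (Fin d))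
                (MonoidHom.id (FreeGroup (Fin d)) (r : FreeGroup (Fin d))) from rfl,
          ← hfund, qmap_apply, map_sum]
        apply Finset.sum_eq_zero
        intro i _
        exact Psi_kill ε hε M π hπadd hπconj _ (hrel i) (FreeGroup.of i)
      have hm : m = π r := (Function.surjInv_eq hπsurj m).symm
      rw [hm, hπr]
    intro a b hab
    have h1 : ι (a - b) = 0 := by rw [map_sub, hab, sub_self]
    exact sub_eq_zero.mp (key _ h1)
  · -- surjectivity of p
    rintro ⟨y, hy⟩
    have hy0 : aug y = 0 := (hmem y).mp hy
    have hysum : (y.coeff.sum fun _ c => c) = 0 := by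
      have hy0' : ((MonoidAlgebra.lift ℤ ℤ G) (1 : G →* ℤ)) y = 0 := hy0
      rw [← hy0', MonoidAlgebra.lift_apply]
      congr 1
      funext g c
      rw [MonoidHom.one_apply, smul_eq_mul, mul_one]
    refine ⟨y.coeff.sum (fun g c => c • foxD ε (Function.surjInv hε g)), Subtype.ext ?_⟩
    rw [hpapp, map_finsuppSum]
    show (Finsupp.sum y.coeff fun g c => qmap ε (c • foxD ε (Function.surjInv hε g))) = y
    have hterm : ∀ g ∈ y.coeff.support, qmap ε ((y.coeff g) • foxD ε (Function.surjInv hε g))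
        = MonoidAlgebra.single g (y.coeff g) - (y.coeff g) • 1 := by
      intro g _
      rw [map_zsmul, qmap_foxD, Function.surjInv_eq hε, smul_sub]
      congr 1
      rw [MonoidAlgebra.of_apply, MonoidAlgebra.smul_single, smul_eq_mul, mul_one]
    rw [Finsupp.sum, Finset.sum_congr rfl hterm, Finset.sum_sub_distrib]
    have h1 : (∑ g ∈ y.coeff.support, MonoidAlgebra.single g (y.coeff g)) = y :=
        MonoidAlgebra.sum_coeff_single y
    have h2 : (∑ g ∈ y.coeff.support, (y.coeff g) • (1 : MonoidAlgebra ℤ G)) = 0 := by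
      rw [← Finset.sum_smul]
      have hs : (∑ g ∈ y.coeff.support, y.coeff g) = 0 := hysum
      rw [hs, zero_smul]
    rw [h1, h2, sub_zero]
  · -- exactness
    apply le_antisymm
    · intro v hv
      have hv0 : qmap ε v = 0 := by
        have h1 := LinearMap.mem_ker.mp hv
        have h2 := congrArg (Subtype.val) h1
        rw [hpapp] at h2
        exact h2
      set u : Fin d → MonoidAlgebra ℤ (FreeGroup (Fin d)) :=
        fun i => MonoidAlgebra.mapDomain (Function.surjInv hε) (v i) with hu
      have hui : ∀ i, MonoidAlgebra.mapDomainRingHom ℤ ε (u i) = v i := by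
        intro i
        rw [estar_eq, hu]
        apply MonoidAlgebra.coeff_injective
        show Finsupp.mapDomain ε (Finsupp.mapDomain (Function.surjInv hε) (v i).coeff) = (v i).coeff
        rw [← Finsupp.mapDomain_comp]
        have hid : (⇑ε ∘ Function.surjInv hε) = id := funext fun g => Function.surjInv_eq hε g
        rw [hid, Finsupp.mapDomain_id]
      have hqu0 : MonoidAlgebra.mapDomainRingHom ℤ ε
          (qmap (MonoidHom.id (FreeGroup (Fin d))) u) = 0 := by
        rw [qmap_apply, map_sum]
        have hterm : ∀ i ∈ Finset.univ, MonoidAlgebra.mapDomainRingHom ℤ ε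
            (u i * (MonoidAlgebra.of ℤ (FreeGroup (Fin d))
              (MonoidHom.id (FreeGroup (Fin d)) (FreeGroup.of i)) - 1))
            = v i * (MonoidAlgebra.of ℤ G (ε (FreeGroup.of i)) - 1) := by
          intro i _
          rw [map_mul, map_sub, map_one, hui, mapDomainRingHom_of]
          rfl
        rw [Finset.sum_congr rfl hterm, ← qmap_apply, hv0]
      have hrange : ∀ x ∈ relSpan ε,
          (fun i => MonoidAlgebra.mapDomainRingHom ℤ ε (fdelta d i x)) ∈ LinearMap.range ι := by
        intro x hx
        induction hx using Submodule.span_induction with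
        | mem x hx =>
            obtain ⟨w, r, hr, rfl⟩ := hx
            have e1 : MonoidAlgebra.single w (1:ℤ) * (MonoidAlgebra.single r 1 - 1)
                = MonoidAlgebra.single (w * r) 1 - MonoidAlgebra.single w 1 := by
              rw [mul_sub, mul_one, MonoidAlgebra.single_mul_single, mul_one]
            have e2 : ∀ i, fdelta d i (MonoidAlgebra.single w (1:ℤ)
                  * (MonoidAlgebra.single r 1 - 1))
                = MonoidAlgebra.of ℤ (FreeGroup (Fin d)) w
                    * foxD (MonoidHom.id (FreeGroup (Fin d))) r i := by
              intro i
              rw [e1, map_sub, fdelta_single, fdelta_single, one_smul, one_smul,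
                foxD_mul]
              simp only [MonoidHom.id_apply, Pi.add_apply, Pi.smul_apply, smul_eq_mul]
              rw [add_sub_cancel_left]
            refine ⟨MonoidAlgebra.of ℤ G (ε w) • π ⟨r, hr⟩, ?_⟩
            rw [map_smul, hιπ ⟨r, hr⟩]
            funext i
            rw [e2 i, map_mul, mapDomainRingHom_of, mapDomainRingHom_foxD]
            rfl
        | zero =>
            refine ⟨0, ?_⟩
            rw [map_zero]
            funext i
            rw [map_zero, map_zero]
            rfl
        | add x y _ _ hx hy =>
            obtain ⟨mx, hmx⟩ := hx
            obtain ⟨my, hmy⟩ := hy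
            refine ⟨mx + my, ?_⟩
            rw [map_add, hmx, hmy]
            funext i
            rw [map_add, map_add]
            rfl
        | smul c x _ hx =>
            obtain ⟨mx, hmx⟩ := hx
            refine ⟨c • mx, ?_⟩
            rw [map_zsmul, hmx]
            funext i
            rw [map_zsmul, map_zsmul]
            rfl
      have hvi : v = fun i => MonoidAlgebra.mapDomainRingHom ℤ ε
          (fdelta d i (qmap (MonoidHom.id (FreeGroup (Fin d))) u)) := by
        funext i
        rw [qmap_apply, map_sum]
        have hterm : ∀ j ∈ Finset.univ, fdelta d i
            (u j * (MonoidAlgebra.of ℤ (FreeGroup (Fin d))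
              (MonoidHom.id (FreeGroup (Fin d)) (FreeGroup.of j)) - 1))
            = if i = j then u j else 0 := by
          intro j _
          exact fdelta_mul_of d i j (u j)
        rw [Finset.sum_congr rfl hterm, Finset.sum_ite_eq]
        simp [hui]
      rw [hvi]
      exact hrange _ (ker_estar_le_relSpan ε hε _ hqu0)
    · rintro v ⟨m, rfl⟩
      apply LinearMap.mem_ker.mpr
      apply Subtype.ext
      rw [hpapp, hιapp]
      rw [qmap_foxD ε, MonoidHom.mem_ker.mp (Function.surjInv hπsurj m).2, map_one, sub_self]
      rfl
end
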